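/- arXiv:2303.03485 — 5 statements merged into one kernel-verified Lean document; each statement's English description precedes it below -/
import Mathlib

section
/- Let d ≥ 2, r ≥ 1 and m ≥ 1 be integers. Suppose there exist positive integers n_1, …, n_d and a nonzero polynomial f of degree m in ℂ[x_{i_1,…,i_d} : i_j ∈ [n_j]] that vanishes on all tensors in ℂ^{n_1} ⊗ ⋯ ⊗ ℂ^{n_d} of partition rank at most r. Then there exists a nonzero polynomial g of degree m in ℂ[x_{i_1,…,i_d} : i_1, …, i_d ∈ [m]] vanishing on all tensors in ℂ^m ⊗ ⋯ ⊗ ℂ^m of partition rank at most r, such that g has integer coefficients whose greatest common divisor is 1, and g has weight (1^m, …, 1^m): for every position k ∈ [d] and every index value j ∈ [m], every monomial of g has total degree exactly 1 in the variables {x_{i_1,…,i_d} : i_k = j}. -/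
open scoped BigOperators
open MvPolynomial

/-- `T` is a single term `A ⊗ B` of a partition rank decomposition. -/
def IsPartitionTerm {K : Type*} [Field K] {d : ℕ} {n : Fin d → ℕ}
    (T : (∀ i, Fin (n i)) → K) : Prop :=
  ∃ I : Finset (Fin d), I.Nonempty ∧ I ≠ Finset.univ ∧
    ∃ (A : (∀ i : {i : Fin d // i ∈ I}, Fin (n i)) → K)
      (B : (∀ i : {i : Fin d // i ∉ I}, Fin (n i)) → K),
      ∀ x, T x = A (fun i => x i) * B (fun i => x i)

/-- The partition rank of `T` is at most `r`. -/
def PartRankLE {K : Type*} [Field K] {d : ℕ} {n : Fin d → ℕ}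
    (T : (∀ i, Fin (n i)) → K) (r : ℕ) : Prop :=
  ∃ c : Fin r → ((∀ i, Fin (n i)) → K),
    (∀ j, IsPartitionTerm (c j)) ∧ T = ∑ j, c j

namespace NVP

variable {d : ℕ} {n : Fin d → ℕ} {m : ℕ}

/-- The `y`-variable index type. -/
abbrev Yv (n : Fin d → ℕ) (m : ℕ) := Σ k : Fin d, Fin m × Fin (n k)

/-- Exponent vector of the y-monomial `∏_k y_{k, w k, i k}`. -/
noncomputable def yE (m : ℕ) (w : Fin d → Fin m) (i : ∀ k, Fin (n k)) : Yv n m →₀ ℕ :=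
  ∑ k, Finsupp.single ⟨k, (w k, i k)⟩ 1

lemma sigma_pair_eq_iff {k' : Fin d} {x y : Fin m × Fin (n k')} :
    (⟨k', x⟩ : Yv n m) = ⟨k', y⟩ ↔ x = y := by
  constructor
  · intro h
    simpa only [Sigma.ext_iff, heq_eq_eq, true_and] using h
  · rintro rfl; rfl

lemma yE_apply (w : Fin d → Fin m) (i : ∀ k, Fin (n k)) (k' : Fin d) (c : Fin m)
    (a : Fin (n k')) :
    yE m w i ⟨k', (c, a)⟩ = if w k' = c ∧ i k' = a then 1 else 0 := by
  classical
  rw [yE, Finsupp.finset_sum_apply, Finset.sum_eq_single k']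
  · rw [Finsupp.single_apply]
    congr 1
    rw [eq_iff_iff, sigma_pair_eq_iff, Prod.mk.injEq]
  · intro k _ hk
    rw [Finsupp.single_apply, if_neg]
    simp only [Sigma.ext_iff]
    tauto
  · simp

/-- Exponent vector of the y-monomial encoding `seq` on a subset `s` of slices. -/
noncomputable def nuF (seq : Fin m → ∀ k, Fin (n k)) (s : Finset (Fin m)) : Yv n m →₀ ℕ :=
  ∑ t ∈ s, yE m (fun _ => t) (seq t)

lemma nuF_apply (seq : Fin m → ∀ k, Fin (n k)) (s : Finset (Fin m)) (k : Fin d) (c : Fin m)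
    (a : Fin (n k)) :
    nuF seq s ⟨k, (c, a)⟩ = if c ∈ s ∧ seq c k = a then 1 else 0 := by
  classical
  rw [nuF, Finsupp.finset_sum_apply]
  rw [Finset.sum_congr rfl (fun t _ => yE_apply (fun _ => t) (seq t) k c a)]
  simp only [ite_and]
  rw [Finset.sum_ite_eq' s c (fun c => if seq c k = a then 1 else 0)]

lemma yE_le_nuF_iff (hd : 0 < d) (seq : Fin m → ∀ k, Fin (n k)) (s : Finset (Fin m))
    (c : Fin m) (i : ∀ k, Fin (n k)) :
    yE m (fun _ => c) i ≤ nuF seq s ↔ (c ∈ s ∧ i = seq c) := by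
  classical
  rw [Finsupp.le_def]
  constructor
  · intro h
    have key : ∀ k, c ∈ s ∧ seq c k = i k := by
      intro k
      have := h ⟨k, (c, i k)⟩
      rw [yE_apply, nuF_apply, if_pos ⟨rfl, rfl⟩] at this
      by_contra hc
      rw [if_neg] at this
      · omega
      · tauto
    exact ⟨(key ⟨0, hd⟩).1, funext fun k => ((key k).2).symm⟩
  · rintro ⟨hc, rfl⟩
    rintro ⟨k, c', a⟩
    rw [yE_apply, nuF_apply]
    by_cases h : c = c' ∧ seq c k = a
    · rw [if_pos h, if_pos ⟨h.1 ▸ hc, h.1 ▸ h.2⟩]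
    · rw [if_neg h]; omega

lemma nuF_sub_yE (seq : Fin m → ∀ k, Fin (n k)) {s : Finset (Fin m)} {c : Fin m}
    (hc : c ∈ s) :
    nuF seq s - yE m (fun _ => c) (seq c) = nuF seq (s.erase c) := by
  classical
  ext z
  obtain ⟨k, t, a⟩ := z
  rw [Finsupp.tsub_apply, yE_apply, nuF_apply, nuF_apply]
  simp only [Finset.mem_erase]
  by_cases h : t = c
  · subst h
    by_cases h2 : seq t k = a
    · rw [if_pos ⟨hc, h2⟩, if_pos ⟨rfl, h2⟩, if_neg (by tauto)]
    · rw [if_neg (by tauto), if_neg (by tauto), if_neg (by tauto)]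
  · rw [if_neg (show ¬(c = t ∧ seq c k = a) from fun hh => h hh.1.symm)]
    by_cases h2 : t ∈ s ∧ seq t k = a
    · rw [if_pos h2, if_pos ⟨⟨h, h2.1⟩, h2.2⟩]
    · rw [if_neg h2, if_neg (by tauto)]

lemma nuF_eq_zero_iff (hd : 0 < d) (seq : Fin m → ∀ k, Fin (n k)) (s : Finset (Fin m)) :
    nuF seq s = 0 ↔ s = ∅ := by
  classical
  constructor
  · intro h
    by_contra hs
    obtain ⟨c, hc⟩ := Finset.nonempty_iff_ne_empty.2 hs
    have := DFunLike.congr_fun h ⟨⟨0, hd⟩, (c, seq c ⟨0, hd⟩)⟩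
    rw [nuF_apply, if_pos ⟨hc, rfl⟩] at this
    simp at this
  · rintro rfl
    simp [nuF]

/-- The generic tensor of rank at most `m`, as a polynomial in the `y`-variables. -/
noncomputable def T0 (m : ℕ) (i : ∀ k, Fin (n k)) : MvPolynomial (Yv n m) ℂ :=
  ∑ c : Fin m, monomial (yE m (fun _ => c) i) 1

/-- Number of ways to match the list `l` with the slices in `s` through `seq`. -/
def Ncount (seq : Fin m → ∀ k, Fin (n k)) : List (∀ k, Fin (n k)) → Finset (Fin m) → ℕ
  | [], s => if s = ∅ then 1 else 0
  | i :: l, s => ∑ c ∈ s.filter (fun c => seq c = i), Ncount seq l (s.erase c)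

lemma coeff_nuF_prod (hd : 0 < d) (seq : Fin m → ∀ k, Fin (n k)) :
    ∀ (l : List (∀ k, Fin (n k))) (s : Finset (Fin m)),
    MvPolynomial.coeff (nuF seq s) ((l.map (T0 m)).prod) = (Ncount seq l s : ℂ) := by
  classical
  intro l
  induction l with
  | nil =>
    intro s
    simp only [List.map_nil, List.prod_nil, Ncount]
    rw [MvPolynomial.coeff_one]
    have h0 : (0 = nuF seq s) ↔ (s = ∅) := eq_comm.trans (nuF_eq_zero_iff hd seq s)
    rw [if_congr h0 rfl rfl]
    split_ifs <;> simp
  | cons i l ih =>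
    intro s
    rw [List.map_cons, List.prod_cons, Ncount]
    rw [T0, Finset.sum_mul, MvPolynomial.coeff_sum]
    have step : ∀ c : Fin m,
        MvPolynomial.coeff (nuF seq s) (monomial (yE m (fun _ => c) i) 1 * (l.map (T0 m)).prod)
        = if c ∈ s ∧ i = seq c then (Ncount seq l (s.erase c) : ℂ) else 0 := by
      intro c
      rw [mul_comm, MvPolynomial.coeff_mul_monomial']
      by_cases h : yE m (fun _ => c) i ≤ nuF seq s
      · rw [if_pos h]
        rw [yE_le_nuF_iff hd] at h
        rw [if_pos h, mul_one]
        obtain ⟨hc, rfl⟩ := h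
        rw [nuF_sub_yE seq hc, ih]
      · rw [if_neg h, if_neg (by rwa [yE_le_nuF_iff hd] at h)]
    rw [Finset.sum_congr rfl (fun c _ => step c)]
    rw [Finset.sum_ite, Finset.sum_const_zero, add_zero]
    rw [Nat.cast_sum]
    apply Finset.sum_nbij' (fun c => c) (fun c => c) <;>
      simp +contextual [eq_comm, and_comm]

lemma Ncount_ne_zero_iff (seq : Fin m → ∀ k, Fin (n k)) :
    ∀ (l : List (∀ k, Fin (n k))) (s : Finset (Fin m)),
    Ncount seq l s ≠ 0 ↔ (l : Multiset (∀ k, Fin (n k))) = s.val.map seq := by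
  classical
  intro l
  induction l with
  | nil =>
    intro s
    simp only [Ncount, Multiset.coe_nil]
    split_ifs with h
    · subst h; simp
    · simp only [ne_eq, not_true_eq_false, false_iff, not_not]
      intro hh
      exact h (Finset.val_eq_zero.mp (Multiset.map_eq_zero.mp hh.symm))
  | cons i l ih =>
    intro s
    rw [Ncount]
    rw [ne_eq, Finset.sum_eq_zero_iff]
    push_neg
    constructor
    · rintro ⟨c, hc, hne⟩
      rw [Finset.mem_filter] at hc
      obtain ⟨hcs, hceq⟩ := hc
      rw [ih] at hne
      have : s.val = c ::ₘ (s.erase c).val := by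
        rw [Finset.erase_val]
        exact (Multiset.cons_erase hcs).symm
      rw [this, Multiset.map_cons, hceq, ← hne, Multiset.cons_coe]
    · intro h
      have hi : i ∈ s.val.map seq := by rw [← h]; simp
      obtain ⟨c, hcs, hceq⟩ := Multiset.mem_map.mp hi
      refine ⟨c, Finset.mem_filter.mpr ⟨hcs, hceq⟩, ?_⟩
      rw [ih]
      have : s.val = c ::ₘ (s.erase c).val := by
        rw [Finset.erase_val]
        exact (Multiset.cons_erase hcs).symm
      rw [this, Multiset.map_cons, hceq] at h
      exact (Multiset.cons_inj_right i).mp h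

lemma prod_toMultiset_map {α M : Type*} [CommMonoid M] (μ : α →₀ ℕ) (g : α → M) :
    (μ.toMultiset.map g).prod = μ.prod fun a e => g a ^ e := by
  classical
  rw [Finsupp.toMultiset_map, Finsupp.prod_toMultiset]
  exact Finsupp.prod_mapDomain_index (fun b => pow_zero b) (fun b x y => pow_add b x y)

lemma list_ofFn_get {α : Type*} {mm : ℕ} (l : List α) (e : mm = l.length) :
    List.ofFn (fun t : Fin mm => l.get (Fin.cast e t)) = l := by
  subst e
  exact List.ofFn_get l

lemma exists_seq (μ : (∀ k, Fin (n k)) →₀ ℕ) (hdeg : (μ.sum fun _ e => e) = m) :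
    ∃ seq : Fin m → ∀ k, Fin (n k),
      (Finset.univ.val.map seq : Multiset (∀ k, Fin (n k))) = μ.toMultiset := by
  classical
  have hlen : m = μ.toMultiset.toList.length := by
    rw [Multiset.length_toList, Finsupp.card_toMultiset]
    exact hdeg.symm
  refine ⟨fun t => μ.toMultiset.toList.get (Fin.cast hlen t), ?_⟩
  have h1 : (Finset.univ.val.map (fun t => μ.toMultiset.toList.get (Fin.cast hlen t))
      : Multiset (∀ k, Fin (n k)))
      = ((List.ofFn (fun t : Fin m => μ.toMultiset.toList.get (Fin.cast hlen t)))
        : Multiset (∀ k, Fin (n k))) := by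
    rw [List.ofFn_eq_map]
    congr 1
  rw [h1, list_ofFn_get _ hlen, Multiset.coe_toList]

/-- The key coefficient computation. -/
lemma coeff_eval₂_T0 (hd : 0 < d) (f : MvPolynomial (∀ k, Fin (n k)) ℂ)
    (μ : (∀ k, Fin (n k)) →₀ ℕ) (hμ : μ ∈ f.support)
    (seq : Fin m → ∀ k, Fin (n k))
    (hseq : (Finset.univ.val.map seq : Multiset (∀ k, Fin (n k))) = μ.toMultiset) :
    MvPolynomial.coeff (nuF seq Finset.univ) (eval₂ C (T0 m) f) ≠ 0 := by
  classical
  rw [eval₂_eq, MvPolynomial.coeff_sum]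
  have key : ∀ μ' : (∀ k, Fin (n k)) →₀ ℕ,
      MvPolynomial.coeff (nuF seq Finset.univ)
        (C (f.coeff μ') * ∏ i ∈ μ'.support, T0 m i ^ μ' i)
      = f.coeff μ' * (Ncount seq μ'.toMultiset.toList Finset.univ : ℂ) := by
    intro μ'
    rw [MvPolynomial.coeff_C_mul]
    congr 1
    have h0 : (∏ i ∈ μ'.support, T0 m i ^ μ' i) = μ'.prod fun a e => T0 m a ^ e := rfl
    have hprod : (∏ i ∈ μ'.support, T0 m i ^ μ' i)
        = ((μ'.toMultiset.toList.map (T0 m)).prod) := by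
      rw [h0, ← prod_toMultiset_map μ' (T0 m)]
      conv_lhs => rw [← Multiset.coe_toList μ'.toMultiset]
      rw [Multiset.map_coe, Multiset.prod_coe]
    rw [hprod, coeff_nuF_prod hd]
  rw [Finset.sum_congr rfl (fun μ' _ => key μ')]
  rw [Finset.sum_eq_single μ]
  · have hN : Ncount seq (Finsupp.toMultiset μ).toList Finset.univ ≠ 0 := by
      rw [Ncount_ne_zero_iff]
      rw [Multiset.coe_toList]
      exact hseq.symm
    exact mul_ne_zero (by simpa using hμ) (Nat.cast_ne_zero.mpr hN)
  · intro μ' hμ' hne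
    have : Ncount seq μ'.toMultiset.toList Finset.univ = 0 := by
      by_contra hnz
      have hnz' := (Ncount_ne_zero_iff seq _ _).mp hnz
      rw [Multiset.coe_toList] at hnz'
      apply hne
      have h2 := hnz'.trans hseq
      rw [← Finsupp.toMultiset_toFinsupp μ', h2, Finsupp.toMultiset_toFinsupp]
    rw [this, Nat.cast_zero, mul_zero]
  · intro h; exact absurd hμ h

/-- Applying linear maps in each direction preserves partition rank. -/
lemma prl_map {d r : ℕ} {n n' : Fin d → ℕ}
    (x : (∀ i, Fin (n' i)) → ℂ) (hx : PartRankLE x r)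
    (L : ∀ k : Fin d, Fin (n' k) → Fin (n k) → ℂ) :
    PartRankLE (fun i : ∀ i, Fin (n i) =>
      ∑ v : ∀ i, Fin (n' i), x v * ∏ k, L k (v k) (i k)) r := by
  obtain ⟨c, hterm, hsum⟩ := hx
  have hxv : ∀ v, x v = ∑ j, c j v := fun v => by rw [hsum]; simp
  refine ⟨fun j i => ∑ v, c j v * ∏ k, L k (v k) (i k), fun j => ?_, ?_⟩
  · obtain ⟨I, hne, hnu, A, B, hAB⟩ := hterm j
    refine ⟨I, hne, hnu,
      fun a => ∑ va : (∀ i : {i : Fin d // i ∈ I}, Fin (n' i)),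
        A va * ∏ k : {i : Fin d // i ∈ I}, L k (va k) (a k),
      fun b => ∑ vb : (∀ i : {i : Fin d // i ∉ I}, Fin (n' i)),
        B vb * ∏ k : {i : Fin d // i ∉ I}, L k (vb k) (b k), ?_⟩
    intro i
    dsimp only
    show _ = (∑ va : (∀ i : {i : Fin d // i ∈ I}, Fin (n' i)), _) * (∑ vb : (∀ i : {i : Fin d // i ∉ I}, Fin (n' i)), _)
    rw [Finset.sum_mul_sum]
    set e := (Equiv.piEquivPiSubtypeProd (fun k : Fin d => k ∈ I) (fun k => Fin (n' k))) with he
    rw [← Equiv.sum_comp e.symm (fun v => c j v * ∏ k, L k (v k) (i k))]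
    rw [Fintype.sum_prod_type]
    refine Finset.sum_congr rfl fun va _ => Finset.sum_congr rfl fun vb _ => ?_
    have hv : ∀ (k : Fin d) (hk : k ∈ I), e.symm (va, vb) k = va ⟨k, hk⟩ := by
      intro k hk
      rw [he, Equiv.piEquivPiSubtypeProd_symm_apply, dif_pos hk]
    have hv' : ∀ (k : Fin d) (hk : k ∉ I), e.symm (va, vb) k = vb ⟨k, hk⟩ := by
      intro k hk
      rw [he, Equiv.piEquivPiSubtypeProd_symm_apply, dif_neg hk]
    calc c j (e.symm (va, vb)) * ∏ k, L k (e.symm (va, vb) k) (i k)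
        = (A va * B vb) * ((∏ k : {i : Fin d // i ∈ I}, L k (va k) (i k))
            * (∏ k : {i : Fin d // i ∉ I}, L k (vb k) (i k))) := by
          rw [hAB, ← Fintype.prod_subtype_mul_prod_subtype (fun k => k ∈ I)
            (fun k => L k (e.symm (va, vb) k) (i k))]
          congr 1
          · congr 1
            · exact congrArg A (funext fun k => hv k k.2)
            · exact congrArg B (funext fun k => hv' k k.2)
          · congr 1
            · exact Finset.prod_congr (by congr 1 <;> exact Subsingleton.elim _ _)
                fun k _ => by rw [hv k k.2]
            · exact Finset.prod_congr (by congr 1 <;> exact Subsingleton.elim _ _)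
                fun k _ => by rw [hv' k k.2]
      _ = _ := by ring
  · funext i
    rw [Finset.sum_apply]
    rw [Finset.sum_comm]
    refine Finset.sum_congr rfl fun v _ => ?_
    rw [hxv v, Finset.sum_mul]

/-- x-weight of a monomial in direction `k`, slice `j`. -/
def wtX {d m : ℕ} (k : Fin d) (j : Fin m) (μ : (Fin d → Fin m) →₀ ℕ) : ℕ :=
  ∑ v ∈ Finset.univ.filter (fun v : Fin d → Fin m => v k = j), μ v

/-- y-weight of a monomial in direction `k`, slice `j`. -/
def wtY (k : Fin d) (j : Fin m) (ρ : Yv n m →₀ ℕ) : ℕ :=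
  ∑ a : Fin (n k), ρ ⟨k, (j, a)⟩

lemma wtX_add {d m : ℕ} (k : Fin d) (j : Fin m) (μ₁ μ₂ : (Fin d → Fin m) →₀ ℕ) :
    wtX k j (μ₁ + μ₂) = wtX k j μ₁ + wtX k j μ₂ := by
  simp [wtX, Finsupp.add_apply, Finset.sum_add_distrib]

lemma wtY_add (k : Fin d) (j : Fin m) (ρ₁ ρ₂ : Yv n m →₀ ℕ) :
    wtY k j (ρ₁ + ρ₂) = wtY k j ρ₁ + wtY k j ρ₂ := by
  simp [wtY, Finsupp.add_apply, Finset.sum_add_distrib]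

/-- The balancedness predicate: each monomial's x-weight matches its y-weight. -/
def Bal (F : MvPolynomial (Yv n m) (MvPolynomial (Fin d → Fin m) ℂ)) : Prop :=
  ∀ ρ μ, μ ∈ (F.coeff ρ).support → ∀ (k : Fin d) (j : Fin m), wtX k j μ = wtY k j ρ

lemma bal_zero : Bal (n := n) (m := m) 0 := by
  intro ρ μ hμ
  simp at hμ

lemma bal_add {F G : MvPolynomial (Yv n m) (MvPolynomial (Fin d → Fin m) ℂ)}
    (hF : Bal F) (hG : Bal G) : Bal (F + G) := by
  intro ρ μ hμ k j
  rw [MvPolynomial.mem_support_iff, MvPolynomial.coeff_add, MvPolynomial.coeff_add] at hμ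
  by_cases h1 : MvPolynomial.coeff μ (MvPolynomial.coeff ρ F) ≠ 0
  · exact hF ρ μ (MvPolynomial.mem_support_iff.mpr h1) k j
  · push_neg at h1
    rw [h1, zero_add] at hμ
    exact hG ρ μ (MvPolynomial.mem_support_iff.mpr hμ) k j

lemma bal_mul {F G : MvPolynomial (Yv n m) (MvPolynomial (Fin d → Fin m) ℂ)}
    (hF : Bal F) (hG : Bal G) : Bal (F * G) := by
  classical
  intro ρ μ hμ k j
  rw [MvPolynomial.mem_support_iff] at hμ
  rw [MvPolynomial.coeff_mul, MvPolynomial.coeff_sum] at hμ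
  obtain ⟨⟨ρ₁, ρ₂⟩, hmem, hne⟩ := Finset.exists_ne_zero_of_sum_ne_zero hμ
  rw [Finset.HasAntidiagonal.mem_antidiagonal] at hmem
  have hμmem : μ ∈ (MvPolynomial.coeff ρ₁ F * MvPolynomial.coeff ρ₂ G).support :=
    MvPolynomial.mem_support_iff.mpr hne
  have := MvPolynomial.support_mul _ _ hμmem
  rw [Finset.mem_add] at this
  obtain ⟨μ₁, hμ₁, μ₂, hμ₂, hμeq⟩ := this
  rw [← hμeq, ← hmem, wtX_add, wtY_add, hF ρ₁ μ₁ hμ₁ k j, hG ρ₂ μ₂ hμ₂ k j]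

/-- The generic substitution polynomial `S_i`. -/
noncomputable def Svar (m : ℕ) (i : ∀ k, Fin (n k)) :
    MvPolynomial (Yv n m) (MvPolynomial (Fin d → Fin m) ℂ) :=
  ∑ v : Fin d → Fin m, monomial (yE m v i) (MvPolynomial.X v)

lemma bal_svar (i : ∀ k, Fin (n k)) : Bal (Svar m i) := by
  classical
  intro ρ μ hμ k j
  rw [MvPolynomial.mem_support_iff, Svar, MvPolynomial.coeff_sum, MvPolynomial.coeff_sum] at hμ
  obtain ⟨v, _, hne⟩ := Finset.exists_ne_zero_of_sum_ne_zero hμ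
  rw [MvPolynomial.coeff_monomial] at hne
  by_cases h : yE m v i = ρ
  · rw [if_pos h] at hne
    rw [MvPolynomial.coeff_X'] at hne
    have hμv : Finsupp.single v 1 = μ := by
      by_contra hc
      rw [if_neg hc] at hne
      exact hne rfl
    subst h
    rw [← hμv]
    have hX : wtX k j (Finsupp.single v 1) = if v k = j then 1 else 0 := by
      rw [wtX]
      rw [Finset.sum_congr rfl (fun v' _ => Finsupp.single_apply)]
      rw [Finset.sum_ite_eq (Finset.univ.filter (fun v' : Fin d → Fin m => v' k = j)) v (fun _ => 1)]
      simp
    have hY : wtY k j (yE m v i) = if v k = j then 1 else 0 := by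
      rw [wtY]
      rw [Finset.sum_congr rfl (fun a _ => yE_apply v i k j a)]
      by_cases hv : v k = j
      · rw [if_pos hv]
        simp only [hv, true_and]
        rw [Finset.sum_ite_eq Finset.univ (i k) (fun _ => 1)]
        simp
      · rw [if_neg hv]
        simp only [hv, false_and]
        simp
    rw [hX, hY]
  · rw [if_neg h] at hne
    simp at hne

lemma bal_F (f : MvPolynomial (∀ k, Fin (n k)) ℂ) :
    Bal (eval₂ ((C : MvPolynomial (Fin d → Fin m) ℂ →+*
      MvPolynomial (Yv n m) (MvPolynomial (Fin d → Fin m) ℂ)).comp C) (Svar m) f) := by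
  induction f using MvPolynomial.induction_on with
  | C a =>
    rw [eval₂_C]
    intro ρ μ hμ k j
    rw [MvPolynomial.mem_support_iff, RingHom.comp_apply, MvPolynomial.coeff_C] at hμ
    by_cases h : (0 : Yv n m →₀ ℕ) = ρ
    · rw [if_pos h] at hμ
      rw [MvPolynomial.coeff_C] at hμ
      by_cases h2 : (0 : (Fin d → Fin m) →₀ ℕ) = μ
      · rw [← h, ← h2]
        simp [wtX, wtY]
      · rw [if_neg h2] at hμ
        exact absurd rfl hμ
    · rw [if_neg h] at hμ
      simp at hμ
  | add p q hp hq => rw [eval₂_add]; exact bal_add hp hq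
  | mul_X p i hp => rw [eval₂_mul, eval₂_X]; exact bal_mul hp (bal_svar i)

lemma eval_eval₂C {R σ τ : Type*} [CommSemiring R] (L : τ → R) (P : σ → MvPolynomial τ R)
    (p : MvPolynomial σ R) :
    eval L (eval₂ C P p) = eval (fun i => eval L (P i)) p := by
  rw [MvPolynomial.eval₂_comp_left (eval L)]
  have h : (eval L).comp (C : R →+* MvPolynomial τ R) = RingHom.id R := by
    ext a; simp
  rw [h]
  rfl

lemma prod_yE {M : Type*} [CommMonoid M] (w : Fin d → Fin m) (i : ∀ k, Fin (n k))
    (B : Yv n m → M) :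
    (yE m w i).prod (fun z e => B z ^ e) = ∏ k, B ⟨k, (w k, i k)⟩ := by
  rw [yE, ← Finsupp.prod_finset_sum_index (fun z => pow_zero (B z)) (fun z x y => pow_add (B z) x y)]
  exact Finset.prod_congr rfl fun k _ => by
    rw [Finsupp.prod_single_index (h := fun z e => B z ^ e) (pow_zero _), pow_one]

lemma map_eval_F (x : (Fin d → Fin m) → ℂ) (f : MvPolynomial (∀ k, Fin (n k)) ℂ) :
    MvPolynomial.map (eval x) (eval₂ ((C : MvPolynomial (Fin d → Fin m) ℂ →+*
        MvPolynomial (Yv n m) (MvPolynomial (Fin d → Fin m) ℂ)).comp C) (Svar m) f)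
      = eval₂ C (fun i => ∑ v : Fin d → Fin m, monomial (yE m v i) (x v)) f := by
  rw [MvPolynomial.eval₂_comp_left (MvPolynomial.map (eval x))]
  have h1 : (MvPolynomial.map (eval x)).comp ((C : MvPolynomial (Fin d → Fin m) ℂ →+*
      MvPolynomial (Yv n m) (MvPolynomial (Fin d → Fin m) ℂ)).comp C)
      = (C : ℂ →+* MvPolynomial (Yv n m) ℂ) := by
    ext a
    simp
  rw [h1]
  congr 1
  funext i
  rw [Function.comp_apply, Svar, map_sum]
  exact Finset.sum_congr rfl fun v _ => by rw [MvPolynomial.map_monomial, eval_X]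

/-- Evaluation of the specialized polynomial at a point `L` of y-space. -/
lemma eval_TxL (x : (Fin d → Fin m) → ℂ) (L : Yv n m → ℂ)
    (f : MvPolynomial (∀ k, Fin (n k)) ℂ) :
    eval L (eval₂ C (fun i => ∑ v : Fin d → Fin m, monomial (yE m v i) (x v)) f)
      = eval (fun i : ∀ k, Fin (n k) =>
          ∑ v : Fin d → Fin m, x v * ∏ k, L ⟨k, (v k, i k)⟩) f := by
  rw [eval_eval₂C]
  have hfun : (fun i : ∀ k, Fin (n k) =>
        eval L (∑ v : Fin d → Fin m, monomial (yE m v i) (x v)))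
      = fun i => ∑ v : Fin d → Fin m, x v * ∏ k, L ⟨k, (v k, i k)⟩ := by
    funext i
    rw [map_sum]
    exact Finset.sum_congr rfl fun v _ => by rw [eval_monomial, prod_yE]
  rw [hfun]

/-- Main complex step: the multilinear y-coefficient of the generic substitution. -/
theorem exists_complex_g {d m r : ℕ} {n : Fin d → ℕ} (hd : 0 < d)
    (f : MvPolynomial (∀ k, Fin (n k)) ℂ) (hf0 : f ≠ 0) (hfdeg : f.totalDegree = m)
    (hvan : ∀ T : (∀ i, Fin (n i)) → ℂ, PartRankLE T r → MvPolynomial.eval T f = 0) :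
    ∃ g : MvPolynomial (Fin d → Fin m) ℂ, g ≠ 0 ∧
      (∀ T : (Fin d → Fin m) → ℂ, PartRankLE (n := fun _ => m) T r →
        MvPolynomial.eval T g = 0) ∧
      (∀ μ ∈ g.support, ∀ (k : Fin d) (j : Fin m), wtX k j μ = 1) := by
  classical
  -- pick a top-degree monomial
  obtain ⟨μ, hμ, hμdeg⟩ : ∃ μ ∈ f.support, (μ.sum fun _ e => e) = m := by
    obtain ⟨μ, hμ, hdeg⟩ := Finset.exists_mem_eq_sup f.support
      (MvPolynomial.support_nonempty.mpr hf0) (fun s => s.sum fun _ e => e)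
    exact ⟨μ, hμ, by rw [← hfdeg, MvPolynomial.totalDegree, hdeg]⟩
  obtain ⟨seq, hseq⟩ := exists_seq μ hμdeg
  set F := eval₂ ((C : MvPolynomial (Fin d → Fin m) ℂ →+*
      MvPolynomial (Yv n m) (MvPolynomial (Fin d → Fin m) ℂ)).comp C) (Svar m) f with hF
  set ν := nuF seq Finset.univ with hν
  refine ⟨F.coeff ν, ?_, ?_, ?_⟩
  · -- nonvanishing via evaluation at the diagonal point
    intro hzero
    set x₀ : (Fin d → Fin m) → ℂ :=
      fun v => ∑ c : Fin m, if v = (fun _ => c) then 1 else 0 with hx₀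
    have h1 : eval x₀ (F.coeff ν) = MvPolynomial.coeff ν
        (MvPolynomial.map (eval x₀) F) := by
      rw [MvPolynomial.coeff_map]
    have h2 : MvPolynomial.map (eval x₀) F = eval₂ C (T0 m) f := by
      rw [hF, map_eval_F]
      congr 1
      funext i
      rw [T0]
      have hswap : ∀ v : Fin d → Fin m, monomial (yE m v i) (x₀ v)
          = ∑ c : Fin m, if v = (fun _ => c) then monomial (yE m v i) (1 : ℂ) else 0 := by
        intro v
        rw [hx₀]
        rw [map_sum (monomial (yE m v i))]
        exact Finset.sum_congr rfl fun c _ => by split_ifs <;> simp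
      rw [Finset.sum_congr rfl fun v _ => hswap v, Finset.sum_comm]
      refine Finset.sum_congr rfl fun c _ => ?_
      rw [Finset.sum_ite_eq' Finset.univ (fun _ => c) (fun v => monomial (yE m v i) (1 : ℂ))]
      simp
    rw [hzero] at h1
    rw [h2] at h1
    exact coeff_eval₂_T0 hd f μ hμ seq hseq (by rw [← h1]; simp)
  · -- vanishing
    intro T hT
    have h1 : eval T (F.coeff ν) = MvPolynomial.coeff ν
        (MvPolynomial.map (eval T) F) := by rw [MvPolynomial.coeff_map]
    rw [h1, hF, map_eval_F]
    have h2 : eval₂ C (fun i => ∑ v : Fin d → Fin m, monomial (yE m v i) (T v)) f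
        = (0 : MvPolynomial (Yv n m) ℂ) := by
      apply MvPolynomial.funext
      intro L
      rw [eval_TxL, map_zero]
      exact hvan _ (prl_map T hT (fun k c a => L ⟨k, (c, a)⟩))
    rw [h2]
    simp
  · -- weights
    intro μ' hμ' k j
    have := bal_F (n := n) (m := m) f ν μ' hμ' k j
    rw [this, hν, wtY]
    rw [Finset.sum_congr rfl (fun a _ => nuF_apply seq Finset.univ k j a)]
    simp only [Finset.mem_univ, true_and]
    rw [Finset.sum_ite_eq Finset.univ (seq j k) (fun _ => 1)]
    simp

/-- The data of a choice of partition for each term. -/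
abbrev IdxSet (d : ℕ) := {I : Finset (Fin d) // I.Nonempty ∧ I ≠ Finset.univ}

/-- The parameter variables for decompositions with partition choices `ι`. -/
abbrev Th (d m r : ℕ) (ι : Fin r → IdxSet d) : Type :=
  Σ j : Fin r, ((∀ i : {i : Fin d // i ∈ (ι j).1}, Fin m) ⊕ (∀ i : {i : Fin d // i ∉ (ι j).1}, Fin m))

/-- The generic partition-rank-`r` tensor with partition pattern `ι`. -/
noncomputable def Pten (R : Type*) [CommSemiring R] {d m r : ℕ} (ι : Fin r → IdxSet d)
    (v : Fin d → Fin m) : MvPolynomial (Th d m r ι) R :=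
  ∑ j : Fin r, MvPolynomial.X ⟨j, Sum.inl (fun i => v i)⟩
    * MvPolynomial.X ⟨j, Sum.inr (fun i => v i)⟩

lemma map_Pten {R S : Type*} [CommSemiring R] [CommSemiring S] (φ : R →+* S)
    {d m r : ℕ} (ι : Fin r → IdxSet d) (v : Fin d → Fin m) :
    MvPolynomial.map φ (Pten R ι v) = Pten S ι v := by
  rw [Pten, Pten, map_sum]
  exact Finset.sum_congr rfl fun j _ => by rw [map_mul, MvPolynomial.map_X, MvPolynomial.map_X]

lemma pten_rank {d m r : ℕ} (ι : Fin r → IdxSet d) (θ : Th d m r ι → ℂ) :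
    PartRankLE (n := fun _ => m) (fun v => eval θ (Pten ℂ ι v)) r := by
  refine ⟨fun j v => θ ⟨j, Sum.inl (fun i => v i)⟩ * θ ⟨j, Sum.inr (fun i => v i)⟩,
    fun j => ⟨(ι j).1, (ι j).2.1, (ι j).2.2,
      fun a => θ ⟨j, Sum.inl a⟩, fun b => θ ⟨j, Sum.inr b⟩, fun v => rfl⟩, ?_⟩
  funext v
  rw [Finset.sum_apply]
  rw [Pten, map_sum]
  exact Finset.sum_congr rfl fun j _ => by rw [map_mul, eval_X, eval_X]

lemma rank_pten {d m r : ℕ} {T : (Fin d → Fin m) → ℂ}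
    (hT : PartRankLE (n := fun _ => m) T r) :
    ∃ (ι : Fin r → IdxSet d) (θ : Th d m r ι → ℂ),
      T = fun v => eval θ (Pten ℂ ι v) := by
  obtain ⟨c, hterm, hsum⟩ := hT
  choose I hne hnu A B hAB using hterm
  refine ⟨fun j => ⟨I j, hne j, hnu j⟩,
    fun z => match z with
      | ⟨j, Sum.inl a⟩ => A j a
      | ⟨j, Sum.inr b⟩ => B j b, ?_⟩
  funext v
  rw [hsum, Finset.sum_apply, Pten, map_sum]
  exact Finset.sum_congr rfl fun j _ => by rw [map_mul, eval_X, eval_X]; exact hAB j v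

lemma phi_map {d m r : ℕ} (ι : Fin r → IdxSet d) (h : MvPolynomial (Fin d → Fin m) ℚ) :
    eval₂ C (Pten ℂ ι) (MvPolynomial.map (algebraMap ℚ ℂ) h)
      = MvPolynomial.map (algebraMap ℚ ℂ) (eval₂ C (Pten ℚ ι) h) := by
  rw [MvPolynomial.eval₂_map, MvPolynomial.eval₂_comp_left (MvPolynomial.map (algebraMap ℚ ℂ))]
  congr 1
  · ext a
    simp
  · funext v
    rw [Function.comp_apply, map_Pten]

theorem rationalize {d m r : ℕ} (g : MvPolynomial (Fin d → Fin m) ℂ) (hg : g ≠ 0)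
    (hvan : ∀ T : (Fin d → Fin m) → ℂ, PartRankLE (n := fun _ => m) T r →
      MvPolynomial.eval T g = 0) :
    ∃ h : MvPolynomial (Fin d → Fin m) ℚ, h ≠ 0 ∧ h.support ⊆ g.support ∧
      (∀ T : (Fin d → Fin m) → ℂ, PartRankLE (n := fun _ => m) T r →
        MvPolynomial.eval T (MvPolynomial.map (algebraMap ℚ ℂ) h) = 0) := by
  classical
  set b := Module.Basis.ofVectorSpace ℚ ℂ with hb
  set q : ((Fin d → Fin m) →₀ ℕ) → _ := fun μ => b.repr (g.coeff μ) with hq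
  set Bf : Finset _ := g.support.biUnion (fun μ => (q μ).support) with hBf
  set gb : _ → MvPolynomial (Fin d → Fin m) ℚ :=
    fun bi => ∑ μ ∈ g.support, monomial μ (q μ bi) with hgb
  have hcoeff : ∀ bi μ', (gb bi).coeff μ' = if μ' ∈ g.support then q μ' bi else 0 := by
    intro bi μ'
    rw [hgb]
    simp only [MvPolynomial.coeff_sum, MvPolynomial.coeff_monomial]
    rw [Finset.sum_ite_eq' g.support μ' (fun μ => q μ bi)]
  have hdecomp : g = ∑ bi ∈ Bf, (b bi : ℂ) • MvPolynomial.map (algebraMap ℚ ℂ) (gb bi) := by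
    apply MvPolynomial.ext
    intro μ'
    rw [MvPolynomial.coeff_sum]
    simp only [MvPolynomial.coeff_smul, MvPolynomial.coeff_map, hcoeff]
    by_cases hin : μ' ∈ g.support
    · simp only [if_pos hin]
      have hsub : (q μ').support ⊆ Bf :=
        Finset.subset_biUnion_of_mem (fun μ => (q μ).support) hin
      have hx2 : ((q μ').sum fun i a => a • b i) = g.coeff μ' := by
        rw [hq]
        have hx := b.linearCombination_repr (g.coeff μ')
        rw [Finsupp.linearCombination_apply] at hx
        exact hx
      rw [Finsupp.sum_of_support_subset (q μ') hsub _
        (fun bi _ => zero_smul ℚ (b bi))] at hx2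
      rw [← hx2]
      refine Finset.sum_congr rfl fun bi _ => ?_
      rw [Rat.smul_def, smul_eq_mul, mul_comm, eq_ratCast (algebraMap ℚ ℂ)]
    · simp only [if_neg hin, MvPolynomial.notMem_support_iff.mp hin]
      simp
  have hPhi : ∀ ι : Fin r → IdxSet d, eval₂ C (Pten ℂ ι) g = 0 := by
    intro ι
    apply MvPolynomial.funext
    intro θ
    rw [map_zero, eval_eval₂C]
    exact hvan _ (pten_rank ι θ)
  have hQ : ∀ bi ∈ Bf, ∀ ι : Fin r → IdxSet d, eval₂ C (Pten ℚ ι) (gb bi) = 0 := by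
    intro bi hbi ι
    have h0 := hPhi ι
    have hterm : ∀ bi' , eval₂ C (Pten ℂ ι) ((b bi' : ℂ) • MvPolynomial.map (algebraMap ℚ ℂ) (gb bi'))
        = (b bi' : ℂ) • MvPolynomial.map (algebraMap ℚ ℂ) (eval₂ C (Pten ℚ ι) (gb bi')) := by
      intro bi'
      rw [MvPolynomial.smul_eq_C_mul, eval₂_mul, eval₂_C, ← MvPolynomial.smul_eq_C_mul, phi_map]
    rw [hdecomp, MvPolynomial.eval₂_sum] at h0
    rw [Finset.sum_congr rfl (fun bi' _ => hterm bi')] at h0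
    apply MvPolynomial.ext
    intro τ
    have hco := congrArg (MvPolynomial.coeff τ) h0
    rw [MvPolynomial.coeff_sum, MvPolynomial.coeff_zero] at hco
    simp only [MvPolynomial.coeff_smul, MvPolynomial.coeff_map] at hco
    have hli := linearIndependent_iff'.mp b.linearIndependent Bf
      (fun bi' => MvPolynomial.coeff τ (eval₂ C (Pten ℚ ι) (gb bi')))
    have hz := hli ?_ bi hbi
    · rw [hz, MvPolynomial.coeff_zero]
    · have hcomm : (∑ bi' ∈ Bf, (MvPolynomial.coeff τ (eval₂ C (Pten ℚ ι) (gb bi'))) • (b bi' : ℂ))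
          = ∑ x ∈ Bf, (b x : ℂ) • algebraMap ℚ ℂ (MvPolynomial.coeff τ (eval₂ C (Pten ℚ ι) (gb x))) :=
        Finset.sum_congr rfl fun bi' _ => by
          rw [Rat.smul_def, smul_eq_mul, mul_comm, eq_ratCast (algebraMap ℚ ℂ)]
      rw [hcomm]
      exact hco
  -- choose a nonzero component
  obtain ⟨μ₀, hμ₀⟩ := MvPolynomial.support_nonempty.mpr hg
  have hco₀ : g.coeff μ₀ ≠ 0 := MvPolynomial.mem_support_iff.mp hμ₀
  have hrepr : q μ₀ ≠ 0 := fun h => hco₀ (b.repr.map_eq_zero_iff.mp h)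
  obtain ⟨bi, hbi⟩ := Finsupp.ne_iff.mp hrepr
  rw [Finsupp.coe_zero, Pi.zero_apply] at hbi
  have hbiB : bi ∈ Bf := Finset.mem_biUnion.mpr ⟨μ₀, hμ₀, Finsupp.mem_support_iff.mpr hbi⟩
  refine ⟨gb bi, ?_, ?_, ?_⟩
  · intro h0
    have := congrArg (MvPolynomial.coeff μ₀) h0
    rw [hcoeff, if_pos hμ₀, MvPolynomial.coeff_zero] at this
    exact hbi this
  · intro μ' hμ'
    by_contra hc
    rw [MvPolynomial.mem_support_iff, hcoeff, if_neg hc] at hμ'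
    exact hμ' rfl
  · intro T hT
    obtain ⟨ι, θ, hTeq⟩ := rank_pten hT
    rw [hTeq, ← eval_eval₂C, phi_map, hQ bi hbiB ι, map_zero, map_zero]

theorem integerize {σ : Type*} (h : MvPolynomial σ ℚ) (hh : h ≠ 0) :
    ∃ (g₀ : MvPolynomial σ ℤ) (G : ℤ) (D : ℕ), G ≠ 0 ∧ D ≠ 0 ∧
      (D : ℚ) • h = (G : ℚ) • MvPolynomial.map (Int.castRingHom ℚ) g₀ ∧
      Finset.gcd g₀.support (fun μ => g₀.coeff μ) = 1 ∧ g₀.support = h.support := by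
  classical
  set D : ℕ := h.support.lcm (fun μ => (h.coeff μ).den) with hD
  have hD0 : D ≠ 0 := by
    intro h0
    rw [hD, Finset.lcm_eq_zero_iff] at h0
    obtain ⟨μ, _, hden⟩ := h0
    exact (h.coeff μ).den_nz (by simpa using hden)
  set g₁ : MvPolynomial σ ℤ := ∑ μ ∈ h.support, monomial μ (((D : ℚ) * h.coeff μ).num) with hg₁
  have hcoeff₁ : ∀ μ', g₁.coeff μ' =
      if μ' ∈ h.support then ((D : ℚ) * h.coeff μ').num else 0 := by
    intro μ'
    rw [hg₁]
    simp only [MvPolynomial.coeff_sum, MvPolynomial.coeff_monomial]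
    rw [Finset.sum_ite_eq' h.support μ' (fun μ => ((D : ℚ) * h.coeff μ).num)]
  have hint : ∀ μ' ∈ h.support, ((((D : ℚ) * h.coeff μ').num : ℤ) : ℚ) = (D : ℚ) * h.coeff μ' := by
    intro μ' hμ'
    have hdvd : (h.coeff μ').den ∣ D := Finset.dvd_lcm hμ'
    obtain ⟨e, he⟩ := hdvd
    have hden : ((h.coeff μ').den : ℚ) ≠ 0 := by
      exact_mod_cast (h.coeff μ').den_nz
    have hden_mul : ((h.coeff μ').den : ℚ) * h.coeff μ' = ((h.coeff μ').num : ℚ) := by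
      have h2 := Rat.num_div_den (h.coeff μ')
      rw [div_eq_iff hden] at h2
      rw [h2]
      ring
    have hrw : (D : ℚ) * h.coeff μ' = (((e : ℤ) * (h.coeff μ').num : ℤ) : ℚ) := by
      rw [he]
      push_cast
      rw [mul_comm ((h.coeff μ').den : ℚ) (e : ℚ), mul_assoc, hden_mul]
    rw [hrw, Rat.num_intCast]
  have hsupp₁ : g₁.support = h.support := by
    ext μ'
    rw [MvPolynomial.mem_support_iff, hcoeff₁]
    constructor
    · intro hne
      by_contra hc
      rw [if_neg hc] at hne
      exact hne rfl
    · intro hmem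
      rw [if_pos hmem]
      have : ((D : ℚ) * h.coeff μ') ≠ 0 :=
        mul_ne_zero (by exact_mod_cast hD0) (MvPolynomial.mem_support_iff.mp hmem)
      exact Rat.num_ne_zero.mpr this
  have hg₁0 : g₁ ≠ 0 := by
    intro h0
    apply hh
    have : g₁.support = ∅ := by rw [h0]; simp
    rw [hsupp₁] at this
    exact MvPolynomial.support_eq_empty.mp this
  have hmap₁ : MvPolynomial.map (Int.castRingHom ℚ) g₁ = (D : ℚ) • h := by
    apply MvPolynomial.ext
    intro μ'
    rw [MvPolynomial.coeff_map, MvPolynomial.coeff_smul, hcoeff₁]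
    by_cases hmem : μ' ∈ h.support
    · rw [if_pos hmem]
      rw [smul_eq_mul]
      exact hint μ' hmem
    · rw [if_neg hmem, MvPolynomial.notMem_support_iff.mp hmem]
      simp
  -- extract gcd
  have hne₁ : g₁.support.Nonempty := MvPolynomial.support_nonempty.mpr hg₁0
  obtain ⟨gf, hgf, hgcd1⟩ := Finset.extract_gcd (fun μ => g₁.coeff μ) hne₁
  set G : ℤ := g₁.support.gcd (fun μ => g₁.coeff μ) with hG
  have hG0 : G ≠ 0 := by
    intro h0
    rw [hG, Finset.gcd_eq_zero_iff] at h0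
    obtain ⟨μ', hμ'⟩ := hne₁
    exact MvPolynomial.mem_support_iff.mp hμ' (h0 μ' hμ')
  set g₀ : MvPolynomial σ ℤ := ∑ μ ∈ g₁.support, monomial μ (gf μ) with hg₀
  have hcoeff₀ : ∀ μ', g₀.coeff μ' = if μ' ∈ g₁.support then gf μ' else 0 := by
    intro μ'
    rw [hg₀]
    simp only [MvPolynomial.coeff_sum, MvPolynomial.coeff_monomial]
    rw [Finset.sum_ite_eq' g₁.support μ' (fun μ => gf μ)]
  have hfac : g₁ = C G * g₀ := by
    apply MvPolynomial.ext
    intro μ'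
    rw [MvPolynomial.coeff_C_mul, hcoeff₀]
    by_cases hmem : μ' ∈ g₁.support
    · rw [if_pos hmem]
      exact hgf μ' hmem
    · rw [if_neg hmem, MvPolynomial.notMem_support_iff.mp hmem, mul_zero]
  have hsupp₀ : g₀.support = g₁.support := by
    ext μ'
    rw [MvPolynomial.mem_support_iff, hcoeff₀]
    constructor
    · intro hne
      by_contra hc
      rw [if_neg hc] at hne
      exact hne rfl
    · intro hmem
      rw [if_pos hmem]
      intro h0
      apply MvPolynomial.mem_support_iff.mp hmem
      rw [hgf μ' hmem, h0, mul_zero]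
  refine ⟨g₀, G, D, hG0, hD0, ?_, ?_, hsupp₀.trans hsupp₁⟩
  · rw [← hmap₁, hfac, map_mul, MvPolynomial.map_C]
    rw [MvPolynomial.smul_eq_C_mul]
    norm_num
  · rw [hsupp₀]
    rw [Finset.gcd_congr rfl (fun μ' hmem => by rw [hcoeff₀, if_pos hmem])]
    exact hgcd1

end NVP

/-- Lemma 2.1: if some nonzero complex polynomial of degree `m` vanishes on all
tensors of partition rank at most `r`, then there is one, in variables indexed by
`[m]^d`, which is nonzero of degree `m`, vanishes on all tensors in
`ℂ^m ⊗ ⋯ ⊗ ℂ^m` of partition rank at most `r`, has integer coefficients of gcd `1`,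
and has weight `(1^m, …, 1^m)`: for each direction `k` and each index value `j`,
every monomial has total degree exactly `1` in the variables whose `k`-th index
is `j`. -/
theorem normalised_vanishing_polynomial
    (d r m : ℕ) (hd : 2 ≤ d) (hr : 1 ≤ r) (hm : 1 ≤ m)
    (hpoly : ∃ (n : Fin d → ℕ) (_ : ∀ i, 1 ≤ n i)
      (f : MvPolynomial (∀ i, Fin (n i)) ℂ), f ≠ 0 ∧ f.totalDegree = m ∧
        ∀ T : (∀ i, Fin (n i)) → ℂ, PartRankLE T r → MvPolynomial.eval T f = 0) :
    ∃ g : MvPolynomial (Fin d → Fin m) ℂ,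
      g ≠ 0 ∧ g.totalDegree = m ∧
      (∀ T : (Fin d → Fin m) → ℂ, PartRankLE (n := fun _ => m) T r →
        MvPolynomial.eval T g = 0) ∧
      (∃ g₀ : MvPolynomial (Fin d → Fin m) ℤ,
        g = MvPolynomial.map (Int.castRingHom ℂ) g₀ ∧
        Finset.gcd g₀.support (fun μ => g₀.coeff μ) = 1) ∧
      (∀ (k : Fin d) (j : Fin m), ∀ μ ∈ g.support,
        ∑ v ∈ Finset.univ.filter (fun v : Fin d → Fin m => v k = j), μ v = 1) := by
  classical
  obtain ⟨n, hn, f, hf0, hfdeg, hvan⟩ := hpoly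
  have hd0 : 0 < d := by omega
  obtain ⟨gC, hgC0, hgCvan, hgCwt⟩ :=
    NVP.exists_complex_g (m := m) (r := r) hd0 f hf0 hfdeg hvan
  obtain ⟨h, hh0, hsub, hhvan⟩ := NVP.rationalize gC hgC0 hgCvan
  obtain ⟨g₀, G, D, hG0, hD0, hrel, hgcd, hsupp⟩ := NVP.integerize h hh0
  set g : MvPolynomial (Fin d → Fin m) ℂ := MvPolynomial.map (Int.castRingHom ℂ) g₀ with hgdef
  have hsuppg : g.support = h.support :=
    (MvPolynomial.support_map_of_injective g₀ Int.cast_injective).trans hsupp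
  have hg0 : g ≠ 0 := by
    intro hz
    apply hh0
    apply MvPolynomial.support_eq_empty.mp
    rw [← hsuppg, hz, MvPolynomial.support_zero]
  have hwt : ∀ μ ∈ g.support, ∀ (k : Fin d) (j : Fin m), NVP.wtX k j μ = 1 := by
    intro μ hμ k j
    exact hgCwt μ (hsub (hsuppg ▸ hμ)) k j
  have hdegs : ∀ μ ∈ g.support, (μ.sum fun _ e => e) = m := by
    intro μ hμ
    have h1 : (μ.sum fun _ e => e) = ∑ v : Fin d → Fin m, μ v :=
      Finsupp.sum_fintype _ _ (fun _ => rfl)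
    rw [h1, ← Finset.sum_fiberwise_of_maps_to
      (fun v _ => Finset.mem_univ (v ⟨0, hd0⟩)) (fun v => μ v)]
    have h2 : ∀ j : Fin m, ∑ i ∈ Finset.filter (fun i : Fin d → Fin m => i ⟨0, hd0⟩ = j)
        Finset.univ, μ i = 1 := fun j => hwt μ hμ ⟨0, hd0⟩ j
    rw [Finset.sum_congr rfl fun j _ => h2 j]
    simp
  have hpolyrel : (D : ℂ) • (MvPolynomial.map (algebraMap ℚ ℂ) h) = (G : ℂ) • g := by
    apply MvPolynomial.ext
    intro μ
    have hc := congrArg (MvPolynomial.coeff μ) hrel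
    rw [MvPolynomial.coeff_smul, MvPolynomial.coeff_smul, MvPolynomial.coeff_map] at hc
    rw [MvPolynomial.coeff_smul, MvPolynomial.coeff_smul, MvPolynomial.coeff_map,
      MvPolynomial.coeff_map]
    rw [smul_eq_mul, smul_eq_mul] at hc ⊢
    rw [eq_ratCast (algebraMap ℚ ℂ), eq_intCast (Int.castRingHom ℂ)]
    rw [eq_intCast (Int.castRingHom ℚ)] at hc
    exact_mod_cast hc
  refine ⟨g, hg0, ?_, ?_, ⟨g₀, hgdef, hgcd⟩, ?_⟩
  · apply le_antisymm
    · rw [MvPolynomial.totalDegree]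
      exact Finset.sup_le fun μ hμ => le_of_eq (hdegs μ hμ)
    · obtain ⟨μ, hμ⟩ := MvPolynomial.support_nonempty.mpr hg0
      rw [MvPolynomial.totalDegree]
      calc m = μ.sum fun _ e => e := (hdegs μ hμ).symm
        _ ≤ _ := Finset.le_sup (f := fun μ : (Fin d → Fin m) →₀ ℕ => μ.sum fun _ e => e) hμ
  · intro T hT
    have h1 := congrArg (MvPolynomial.eval T) hpolyrel
    rw [MvPolynomial.smul_eq_C_mul, MvPolynomial.smul_eq_C_mul, map_mul, map_mul,
      MvPolynomial.eval_C, MvPolynomial.eval_C, hhvan T hT, mul_zero] at h1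
    have hGne : (G : ℂ) ≠ 0 := Int.cast_ne_zero.mpr hG0
    exact (mul_eq_zero.mp h1.symm).resolve_left hGne
  · intro k j μ hμ
    exact hwt μ hμ k j
end

section
/- Let d ≥ 2 and r ≥ 1 be integers and set n := 2^{d+3} r. Then there exists a nonzero polynomial f of degree at most (2^{d+3} r)^{2d} in ℂ[x_{i_1,…,i_d} : i_1, …, i_d ∈ [n]] that vanishes on all tensors in ℂ^n ⊗ ⋯ ⊗ ℂ^n (d factors) with partition rank at most r. -/
open scoped BigOperators

namespace VanishingAux

open MvPolynomial

noncomputable section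

/-- Equiv between bounded finsupps and functions to `Fin (m+1)`. -/
def boundedFinsuppEquiv (α : Type*) [Fintype α] (m : ℕ) :
    {f : α →₀ ℕ | ∀ i, f i ≤ m} ≃ (α → Fin (m + 1)) where
  toFun f i := ⟨f.1 i, Nat.lt_succ_of_le (f.2 i)⟩
  invFun g := ⟨Finsupp.equivFunOnFinite.symm fun i => (g i : ℕ), fun i => by
    simp [Nat.lt_succ_iff.mp (g i).isLt]⟩
  left_inv f := by
    apply Subtype.ext
    apply Finsupp.ext
    intro i
    simp
  right_inv g := by
    funext i
    apply Fin.ext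
    simp

theorem finrank_restrictDegree (α : Type*) [Fintype α] (R : Type*) [Field R] (m : ℕ) :
    Module.finrank R (restrictDegree α R m) = (m + 1) ^ Fintype.card α := by
  classical
  haveI : Fintype {f : α →₀ ℕ | ∀ i, f i ≤ m} :=
    Fintype.ofEquiv _ (boundedFinsuppEquiv α m).symm
  have hb : Module.finrank R (restrictDegree α R m)
      = Fintype.card {f : α →₀ ℕ | ∀ i, f i ≤ m} :=
    Module.finrank_eq_card_basis
      (basisRestrictSupport R {f : α →₀ ℕ | ∀ i, f i ≤ m})
  rw [hb, Fintype.card_congr (boundedFinsuppEquiv α m)]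
  simp [Fintype.card_fun]

theorem totalDegree_le_of_mem_restrictDegree {α : Type*} [Fintype α] {R : Type*} [CommRing R]
    {m : ℕ} {f : MvPolynomial α R} (hf : f ∈ restrictDegree α R m) :
    f.totalDegree ≤ Fintype.card α * m := by
  rw [totalDegree]
  refine Finset.sup_le fun s hs => ?_
  have h1 : (s.sum fun _ e => e) = ∑ i ∈ s.support, s i := rfl
  rw [h1]
  calc ∑ i ∈ s.support, s i ≤ ∑ _i ∈ s.support, m :=
        Finset.sum_le_sum fun i _ => (mem_restrictDegree _ _ _).mp hf s hs i
    _ = s.support.card * m := by rw [Finset.sum_const, smul_eq_mul]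
    _ ≤ Fintype.card α * m :=
        Nat.mul_le_mul_right m (Finset.card_le_card (Finset.subset_univ _))

theorem totalDegree_aeval_le' {σ τ : Type*} {R : Type*} [CommRing R]
    (g : σ → MvPolynomial τ R) (D : ℕ) (hg : ∀ x, (g x).totalDegree ≤ D)
    (f : MvPolynomial σ R) (k : ℕ) (hf : f.totalDegree ≤ k) :
    (aeval g f).totalDegree ≤ D * k := by
  rw [aeval_def, eval₂_eq]
  refine totalDegree_finsetSum_le fun s hs => ?_
  refine (totalDegree_mul _ _).trans ?_
  have h1 : (algebraMap R (MvPolynomial τ R) (f.coeff s)).totalDegree = 0 := by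
    rw [algebraMap_eq]; exact totalDegree_C _
  rw [h1, zero_add]
  refine (totalDegree_finset_prod _ _).trans ?_
  calc ∑ i ∈ s.support, ((g i) ^ (s i)).totalDegree
      ≤ ∑ i ∈ s.support, s i * D := by
        refine Finset.sum_le_sum fun i _ => ?_
        exact (totalDegree_pow _ _).trans (Nat.mul_le_mul_left _ (hg i))
    _ = (∑ i ∈ s.support, s i) * D := by rw [Finset.sum_mul]
    _ ≤ k * D := by
        refine Nat.mul_le_mul_right _ ?_
        exact (le_totalDegree hs).trans hf
    _ = D * k := Nat.mul_comm _ _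

theorem eval_aeval' {σ τ : Type*} {R : Type*} [CommRing R]
    (g : σ → MvPolynomial τ R) (p : τ → R) (f : MvPolynomial σ R) :
    eval p (aeval g f) = eval (fun x => eval p (g x)) f := by
  rw [aeval_def, algebraMap_eq, ← eval_assoc]
  rfl

/-- Index type for admissible partition subsets. -/
abbrev PrIdx (d : ℕ) := {I : Finset (Fin d) // I.Nonempty ∧ I ≠ Finset.univ}

/-- Parameter index type for the universal parametrization of partition-rank-`≤ r` tensors. -/
abbrev Par (d n r : ℕ) :=
  Σ I : PrIdx d, Fin r × (({i : Fin d // i ∈ I.1} → Fin n) ⊕ ({i : Fin d // i ∉ I.1} → Fin n))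

/-- The universal quadratic parametrization. -/
def Phi (d n r : ℕ) (x : Fin d → Fin n) : MvPolynomial (Par d n r) ℂ :=
  ∑ I : PrIdx d, ∑ j : Fin r,
    X ⟨I, j, Sum.inl fun i => x i⟩ * X ⟨I, j, Sum.inr fun i => x i⟩

theorem totalDegree_Phi (d n r : ℕ) (x : Fin d → Fin n) :
    (Phi d n r x).totalDegree ≤ 2 := by
  refine totalDegree_finsetSum_le fun I _ => ?_
  refine totalDegree_finsetSum_le fun j _ => ?_
  refine (totalDegree_mul _ _).trans ?_
  simp [totalDegree_X]

theorem card_Par_le (d n r : ℕ) (hd : 1 ≤ d) (hn : 1 ≤ n) :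
    Fintype.card (Par d n r) ≤ 2 ^ d * (r * (2 * n ^ (d - 1))) := by
  rw [Fintype.card_sigma]
  calc ∑ I : PrIdx d, Fintype.card
        (Fin r × (({i : Fin d // i ∈ I.1} → Fin n) ⊕ ({i : Fin d // i ∉ I.1} → Fin n)))
      ≤ ∑ _I : PrIdx d, r * (2 * n ^ (d - 1)) := by
        refine Finset.sum_le_sum fun I _ => ?_
        rw [Fintype.card_prod, Fintype.card_sum, Fintype.card_fin]
        refine Nat.mul_le_mul_left r ?_
        have hc1 : 1 ≤ I.1.card := Finset.card_pos.mpr I.2.1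
        have hc2 : I.1.card < d := by
          have := Finset.card_lt_card (Finset.ssubset_univ_iff.mpr I.2.2)
          simpa using this
        have e1 : Fintype.card ({i : Fin d // i ∈ I.1} → Fin n) = n ^ I.1.card := by
          simp [Fintype.card_fun]
        have e2 : Fintype.card ({i : Fin d // i ∉ I.1} → Fin n) = n ^ (d - I.1.card) := by
          rw [Fintype.card_fun, Fintype.card_fin]
          congr 1
          rw [Fintype.card_subtype_compl]
          simp
        rw [e1, e2, two_mul]
        have b1 : n ^ I.1.card ≤ n ^ (d - 1) :=
          Nat.pow_le_pow_right hn (by omega)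
        have b2 : n ^ (d - I.1.card) ≤ n ^ (d - 1) :=
          Nat.pow_le_pow_right hn (by omega)
        omega
    _ ≤ 2 ^ d * (r * (2 * n ^ (d - 1))) := by
        rw [Finset.sum_const, smul_eq_mul]
        refine Nat.mul_le_mul_right _ ?_
        calc Finset.univ.card = Fintype.card (PrIdx d) := rfl
          _ ≤ Fintype.card (Finset (Fin d)) := Fintype.card_subtype_le _
          _ = 2 ^ d := by simp

theorem exists_param {d n r : ℕ} (T : (Fin d → Fin n) → ℂ)
    (hT : PartRankLE (n := fun _ => n) T r) :
    ∃ p : Par d n r → ℂ, ∀ x, eval p (Phi d n r x) = T x := by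
  classical
  obtain ⟨c, hc, hTc⟩ := hT
  choose I hIne hIu A B hAB using hc
  refine ⟨fun t =>
    Sum.elim
      (fun a => if h : t.1.1 = I t.2.1 then
          A t.2.1 (fun i => a ⟨i.1, (Finset.ext_iff.mp h i.1).mpr i.2⟩) else 0)
      (fun b => if h : t.1.1 = I t.2.1 then
          B t.2.1 (fun i => b ⟨i.1, fun hm => i.2 ((Finset.ext_iff.mp h i.1).mp hm)⟩) else 0)
      t.2.2, fun x => ?_⟩
  simp only [Phi, map_sum, eval_mul, eval_X, Sum.elim_inl, Sum.elim_inr]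
  rw [Finset.sum_comm, hTc]
  simp only [Finset.sum_apply]
  refine Finset.sum_congr rfl fun j _ => ?_
  rw [Finset.sum_eq_single (⟨I j, hIne j, hIu j⟩ : PrIdx d)]
  · simp only [dif_pos rfl]
    exact (hAB j x).symm
  · intro I' _ hne
    have h : I'.1 ≠ I j := fun h => hne (Subtype.ext h)
    simp only [dif_neg h, mul_zero]
  · intro h; exact absurd (Finset.mem_univ _) h

theorem key_ineq (M N : ℕ) (hN : 1 ≤ N) (hMN : 4 * M ≤ N) :
    (2 * (N * N) + 1) ^ M < (N + 1) ^ N := by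
  rcases Nat.eq_zero_or_pos M with hM | hM
  · subst hM
    simpa using Nat.one_lt_pow (by omega) (by omega)
  · calc (2 * (N * N) + 1) ^ M < ((N + 1) ^ 4) ^ M :=
        Nat.pow_lt_pow_left (by nlinarith) (by omega)
    _ = (N + 1) ^ (4 * M) := by rw [← pow_mul]
    _ ≤ (N + 1) ^ N := Nat.pow_le_pow_right (by omega) hMN

end

end VanishingAux

set_option maxHeartbeats 1000000 in
/-- Theorem 3.1: for `n = 2^(d+3) r` there is a nonzero polynomial of degree at most
`(2^(d+3) r)^(2d)` in the entries of an `n × ⋯ × n` tensor which vanishes on all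
complex tensors of partition rank at most `r`. -/
theorem exists_vanishing_polynomial
    (d r : ℕ) (hd : 2 ≤ d) (hr : 1 ≤ r) (n : ℕ) (hn : n = 2 ^ (d + 3) * r) :
    ∃ f : MvPolynomial (Fin d → Fin n) ℂ, f ≠ 0 ∧
      f.totalDegree ≤ (2 ^ (d + 3) * r) ^ (2 * d) ∧
      ∀ T : (Fin d → Fin n) → ℂ, PartRankLE (n := fun _ => n) T r →
        MvPolynomial.eval T f = 0 := by
  classical
  open MvPolynomial VanishingAux in
  set N := n ^ d with hN
  have hn1 : 1 ≤ n := by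
    have : 1 ≤ 2 ^ (d + 3) * r := Nat.one_le_iff_ne_zero.mpr (by positivity)
    omega
  have hN1 : 1 ≤ N := Nat.one_le_iff_ne_zero.mpr (by positivity)
  have hcardσ : Fintype.card (Fin d → Fin n) = N := by
    simp [hN, Fintype.card_fun]
  -- the parameter count
  set M := Fintype.card (Par d n r) with hM
  have hMN : 4 * M ≤ N := by
    have h1 := card_Par_le d n r (by omega) hn1
    have h2 : n ^ d = n ^ (d - 1) * n := by
      conv_lhs => rw [show d = (d - 1) + 1 by omega]
      rw [pow_succ]
    calc 4 * M ≤ 4 * (2 ^ d * (r * (2 * n ^ (d - 1)))) := by omega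
      _ = (2 ^ (d + 3) * r) * n ^ (d - 1) := by rw [pow_add]; ring
      _ = n * n ^ (d - 1) := by rw [hn]
      _ = N := by rw [hN, h2]; ring
  -- the linear map
  have hmem : ∀ g : restrictDegree (Fin d → Fin n) ℂ N,
      MvPolynomial.aeval (Phi d n r) (g : MvPolynomial (Fin d → Fin n) ℂ)
        ∈ restrictDegree (Par d n r) ℂ (2 * (N * N)) := by
    intro g
    apply restrictTotalDegree_le_restrictDegree
    rw [mem_restrictTotalDegree]
    refine totalDegree_aeval_le' _ 2 (totalDegree_Phi d n r) _ (N * N) ?_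
    have := totalDegree_le_of_mem_restrictDegree g.2
    rwa [hcardσ] at this
  let L : restrictDegree (Fin d → Fin n) ℂ N →ₗ[ℂ] restrictDegree (Par d n r) ℂ (2 * (N * N)) :=
    LinearMap.codRestrict _
      ((MvPolynomial.aeval (Phi d n r)).toLinearMap.comp (Submodule.subtype _)) hmem
  have hrank : Module.finrank ℂ (restrictDegree (Par d n r) ℂ (2 * (N * N)))
      < Module.finrank ℂ (restrictDegree (Fin d → Fin n) ℂ N) := by
    rw [finrank_restrictDegree, finrank_restrictDegree, hcardσ, ← hM]
    exact key_ineq M N hN1 hMN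
  have hni : ¬ Function.Injective L := fun hinj =>
    absurd (LinearMap.finrank_le_finrank_of_injective hinj) (by omega)
  have hker : LinearMap.ker L ≠ ⊥ := fun h => hni (LinearMap.ker_eq_bot.mp h)
  obtain ⟨g, hgker, hg0⟩ := (Submodule.ne_bot_iff _).mp hker
  have hgeval : MvPolynomial.aeval (Phi d n r) (g : MvPolynomial (Fin d → Fin n) ℂ) = 0 := by
    have h1 : L g = 0 := hgker
    have h2 : ((L g : restrictDegree (Par d n r) ℂ (2 * (N * N)))
        : MvPolynomial (Par d n r) ℂ) = 0 := by rw [h1]; rfl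
    simpa [L] using h2
  refine ⟨(g : MvPolynomial (Fin d → Fin n) ℂ), ?_, ?_, ?_⟩
  · simpa using hg0
  · have hdeg := totalDegree_le_of_mem_restrictDegree g.2
    rw [hcardσ] at hdeg
    have : (2 ^ (d + 3) * r) ^ (2 * d) = N * N := by
      rw [← hn, hN, show 2 * d = d + d by ring, pow_add]
    omega
  · intro T hT
    obtain ⟨p, hp⟩ := exists_param T hT
    have hTp : (fun x => MvPolynomial.eval p (Phi d n r x)) = T := funext hp
    calc MvPolynomial.eval T (g : MvPolynomial (Fin d → Fin n) ℂ)
        = MvPolynomial.eval p (MvPolynomial.aeval (Phi d n r)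
            (g : MvPolynomial (Fin d → Fin n) ℂ)) := by
          rw [eval_aeval', hTp]
      _ = 0 := by rw [hgeval]; simp
end

section
/- Let n ≥ 1. Consider the action of the group G := SL_n(ℂ) × SL_n(ℂ) × SL_n(ℂ) on ℂ^n ⊗ ℂ^n ⊗ ℂ^n determined by (g_1, g_2, g_3)·(u ⊗ v ⊗ w) = (g_1 u) ⊗ (g_2 v) ⊗ (g_3 w). If T ∈ ℂ^n ⊗ ℂ^n ⊗ ℂ^n has slice rank strictly less than n, then every G-invariant polynomial function f on ℂ^n ⊗ ℂ^n ⊗ ℂ^n with f(0) = 0 satisfies f(T) = 0; that is, T lies in the nullcone of the G-action. -/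
open scoped BigOperators

/-- `T` is a single term of a slice rank decomposition: a vector in one of the three
positions tensored with an order-2 tensor in the other two positions. -/
def IsSliceTerm {K : Type*} [Field K] {n : ℕ} (T : Fin n → Fin n → Fin n → K) : Prop :=
  (∃ (v : Fin n → K) (M : Fin n → Fin n → K), ∀ a b c, T a b c = v a * M b c) ∨
  (∃ (v : Fin n → K) (M : Fin n → Fin n → K), ∀ a b c, T a b c = v b * M a c) ∨
  (∃ (v : Fin n → K) (M : Fin n → Fin n → K), ∀ a b c, T a b c = v c * M a b)

/-- The slice rank of `T` is at most `r`. -/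
def SliceRankLE {K : Type*} [Field K] {n : ℕ}
    (T : Fin n → Fin n → Fin n → K) (r : ℕ) : Prop :=
  ∃ c : Fin r → (Fin n → Fin n → Fin n → K),
    (∀ j, IsSliceTerm (c j)) ∧ ∀ a b c', T a b c' = ∑ j, c j a b c'

/-- The factorwise action of a triple of `n × n` matrices on an order-3 tensor,
determined by `(g₁, g₂, g₃) · (u ⊗ v ⊗ w) = (g₁ u) ⊗ (g₂ v) ⊗ (g₃ w)`. -/
noncomputable def act3 {n : ℕ} (g₁ g₂ g₃ : Matrix (Fin n) (Fin n) ℂ)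
    (T : Fin n → Fin n → Fin n → ℂ) : Fin n → Fin n → Fin n → ℂ :=
  fun a b c => ∑ a', ∑ b', ∑ c', g₁ a a' * g₂ b b' * g₃ c c' * T a' b' c'

section Aux
open Polynomial Module Submodule LinearMap Matrix

noncomputable def prOf {n : ℕ} (V W : Submodule ℂ (Fin n → ℂ)) (h : IsCompl V W) :
    (Fin n → ℂ) →ₗ[ℂ] (Fin n → ℂ) :=
  V.subtype ∘ₗ V.projectionOnto W h

lemma prOf_left {n : ℕ} {V W : Submodule ℂ (Fin n → ℂ)} (h : IsCompl V W)
    {x : Fin n → ℂ} (hx : x ∈ V) : prOf V W h x = x := by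
  simp [prOf, Submodule.projectionOnto_apply_of_mem_left h hx]

lemma prOf_right {n : ℕ} {V W : Submodule ℂ (Fin n → ℂ)} (h : IsCompl V W)
    {x : Fin n → ℂ} (hx : x ∈ W) : prOf V W h x = 0 := by
  simp [prOf, Submodule.projectionOnto_apply_of_mem_right h hx]

noncomputable def phiOf {n : ℕ} (V W : Submodule ℂ (Fin n → ℂ)) (h : IsCompl V W)
    (a b : ℂ) : (Fin n → ℂ) →ₗ[ℂ] (Fin n → ℂ) :=
  a • prOf V W h + b • (LinearMap.id - prOf V W h)

lemma phiOf_apply {n : ℕ} (V W : Submodule ℂ (Fin n → ℂ)) (h : IsCompl V W)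
    (a b : ℂ) (x : Fin n → ℂ) :
    phiOf V W h a b x = a • prOf V W h x + b • (x - prOf V W h x) := rfl

lemma det_aux {n : ℕ} (V W : Submodule ℂ (Fin n → ℂ)) (h : IsCompl V W)
    (a b : ℂ) :
    LinearMap.det (phiOf V W h a b)
      = a ^ (finrank ℂ V) * b ^ (finrank ℂ W) := by
  classical
  set d := finrank ℂ V
  let bV : Basis (Fin d) ℂ V := finBasis ℂ V
  let bW : Basis (Fin (finrank ℂ W)) ℂ W := finBasis ℂ W
  let B : Basis (Fin d ⊕ Fin (finrank ℂ W)) ℂ (Fin n → ℂ) :=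
    (bV.prod bW).map (Submodule.prodEquivOfIsCompl V W h)
  have hB : ∀ j, phiOf V W h a b (B j)
      = (Sum.elim (fun _ : Fin d => a) (fun _ : Fin (finrank ℂ W) => b) j) • B j := by
    rintro (k | k)
    · have hmem : (B (Sum.inl k)) ∈ V := by
        simp [B, Basis.map_apply, Basis.prod_apply, Submodule.coe_prodEquivOfIsCompl']
      rw [phiOf_apply, prOf_left h hmem]; simp
    · have hmem : (B (Sum.inr k)) ∈ W := by
        simp [B, Basis.map_apply, Basis.prod_apply, Submodule.coe_prodEquivOfIsCompl']
      rw [phiOf_apply, prOf_right h hmem]; simp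
  rw [← LinearMap.det_toMatrix B]
  have : (LinearMap.toMatrix B B) (phiOf V W h a b)
      = Matrix.diagonal (Sum.elim (fun _ : Fin d => a) (fun _ : Fin (finrank ℂ W) => b)) := by
    ext i j
    rw [LinearMap.toMatrix_apply, hB j, _root_.map_smul, Basis.repr_self]
    by_cases hij : i = j
    · subst hij; simp [Matrix.diagonal]
    · simp only [Matrix.diagonal, hij, Finsupp.single_apply, Finsupp.smul_apply,
        Matrix.of_apply, if_false, smul_eq_mul]
      rw [if_neg (fun h : j = i => hij h.symm), mul_zero]
  rw [this, Matrix.det_diagonal]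
  simp [Fintype.prod_sum_type]

lemma fin3_cases (i : Fin 3) : i = 0 ∨ i = 1 ∨ i = 2 := by revert i; decide

end Aux

open Polynomial Module Submodule Matrix in
/-- Lemma 4.1: a tensor in `ℂ^n ⊗ ℂ^n ⊗ ℂ^n` of slice rank strictly less than `n`
lies in the nullcone of the action of `SL_n × SL_n × SL_n`: every invariant
polynomial vanishing at `0` vanishes on it. -/
theorem low_slice_rank_in_nullcone (n : ℕ) (hn : 1 ≤ n)
    (T : Fin n → Fin n → Fin n → ℂ)
    (hT : ∃ r, r < n ∧ SliceRankLE T r)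
    (f : MvPolynomial (Fin n × Fin n × Fin n) ℂ)
    (hinv : ∀ (g₁ g₂ g₃ : Matrix.SpecialLinearGroup (Fin n) ℂ)
      (S : Fin n → Fin n → Fin n → ℂ),
      MvPolynomial.eval
          (fun p => act3 (g₁ : Matrix (Fin n) (Fin n) ℂ) (g₂ : Matrix (Fin n) (Fin n) ℂ)
            (g₃ : Matrix (Fin n) (Fin n) ℂ) S p.1 p.2.1 p.2.2) f
        = MvPolynomial.eval (fun p => S p.1 p.2.1 p.2.2) f)
    (hf0 : MvPolynomial.eval (fun _ => (0 : ℂ)) f = 0) :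
    MvPolynomial.eval (fun p => T p.1 p.2.1 p.2.2) f = 0 := by
  classical
  obtain ⟨r, hrn, cf, hterm, hsum⟩ := hT
  -- choose type and data for each slice term
  have hdata : ∀ j : Fin r, ∃ (i : Fin 3) (v : Fin n → ℂ) (M : Fin n → Fin n → ℂ),
      (i = 0 → ∀ a b c, cf j a b c = v a * M b c) ∧
      (i = 1 → ∀ a b c, cf j a b c = v b * M a c) ∧
      (i = 2 → ∀ a b c, cf j a b c = v c * M a b) := by
    intro j
    rcases hterm j with ⟨v, M, hv⟩ | ⟨v, M, hv⟩ | ⟨v, M, hv⟩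
    · exact ⟨0, v, M, fun _ => hv, fun h => absurd h (by decide), fun h => absurd h (by decide)⟩
    · exact ⟨1, v, M, fun h => absurd h (by decide), fun _ => hv, fun h => absurd h (by decide)⟩
    · exact ⟨2, v, M, fun h => absurd h (by decide), fun h => absurd h (by decide), fun _ => hv⟩
  choose σ vv MM h0 h1 h2 using hdata
  -- the subspaces
  set S : Fin 3 → Finset (Fin r) := fun i => Finset.univ.filter (fun j => σ j = i) with hS
  set V : Fin 3 → Submodule ℂ (Fin n → ℂ) :=
    fun i => Submodule.span ℂ (((S i).image vv : Finset (Fin n → ℂ)) : Set (Fin n → ℂ)) with hV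
  set d : Fin 3 → ℕ := fun i => finrank ℂ (V i) with hd
  have hdle : ∀ i, d i ≤ (S i).card := by
    intro i
    exact le_trans (finrank_span_finset_le_card ((S i).image vv)) (Finset.card_image_le)
  have hcard : (S 0).card + (S 1).card + (S 2).card = r := by
    have := Finset.card_eq_sum_card_fiberwise
      (f := σ) (s := (Finset.univ : Finset (Fin r))) (t := (Finset.univ : Finset (Fin 3)))
      (fun x _ => Finset.mem_univ _)
    simp only [Finset.card_univ, Fintype.card_fin] at this
    rw [Fin.sum_univ_three] at this
    simp only [hS]
    omega
  set D := d 0 + d 1 + d 2 with hD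
  have hDr : D ≤ r := by
    have := hdle 0; have := hdle 1; have := hdle 2; omega
  have hDn : D < n := lt_of_le_of_lt hDr hrn
  have hdn : ∀ i, d i ≤ n := fun i => by
    have h := Submodule.finrank_le (V i)
    rw [Module.finrank_fin_fun] at h
    exact h
  have hmemV : ∀ j : Fin r, vv j ∈ V (σ j) := by
    intro j
    apply Submodule.subset_span
    simp only [Finset.coe_image, Set.mem_image, Finset.mem_coe]
    exact ⟨j, by simp [hS], rfl⟩
  -- complements and projections
  choose W hW using fun i => (V i).exists_isCompl
  set pr : Fin 3 → ((Fin n → ℂ) →ₗ[ℂ] (Fin n → ℂ)) := fun i => prOf (V i) (W i) (hW i) with hpr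
  set PrM : Fin 3 → Matrix (Fin n) (Fin n) ℂ := fun i => LinearMap.toMatrix' (pr i) with hPrM
  -- polynomial matrices
  set GP : Fin 3 → Matrix (Fin n) (Fin n) ℂ[X] :=
    fun i a b => X ^ n * C (PrM i a b) + C ((1 : Matrix (Fin n) (Fin n) ℂ) a b - PrM i a b)
    with hGP
  -- row sums against vectors of V i
  have hrow : ∀ (i : Fin 3) (v : Fin n → ℂ), v ∈ V i → ∀ a,
      ∑ a', GP i a a' * C (v a') = X ^ n * C (v a) := by
    intro i v hv a
    have hmv : ∀ u : Fin n → ℂ, (PrM i).mulVec u = pr i u := by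
      intro u
      rw [hPrM, ← Matrix.toLin'_apply, Matrix.toLin'_toMatrix']
    have h1 : ∑ a', PrM i a a' * v a' = v a := by
      have := congrFun (hmv v) a
      rw [hpr] at this
      rw [Matrix.mulVec, dotProduct] at this
      rw [this, prOf_left (hW i) hv]
    have h2 : ∑ a', (1 : Matrix (Fin n) (Fin n) ℂ) a a' * v a' = v a := by
      simp [Matrix.one_apply]
    have step : ∀ a', GP i a a' * C (v a')
        = X ^ n * C (PrM i a a' * v a')
          + C ((1 : Matrix (Fin n) (Fin n) ℂ) a a' * v a' - PrM i a a' * v a') := by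
      intro a'
      simp only [hGP, _root_.map_mul, map_sub]
      ring
    rw [Finset.sum_congr rfl (fun a' _ => step a'), Finset.sum_add_distrib, ← Finset.mul_sum,
      ← map_sum (C : ℂ →+* ℂ[X]) (fun a' => PrM i a a' * v a') Finset.univ,
      ← map_sum (C : ℂ →+* ℂ[X])
        (fun a' => (1 : Matrix (Fin n) (Fin n) ℂ) a a' * v a' - PrM i a a' * v a') Finset.univ,
      Finset.sum_sub_distrib, h1, h2]
    simp
  -- the polynomial entries
  set P : (Fin n × Fin n × Fin n) → ℂ[X] :=
    fun p => ∑ a', ∑ b', ∑ c', GP 0 p.1 a' * GP 1 p.2.1 b' * GP 2 p.2.2 c' * C (T a' b' c')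
    with hP
  have hXn : ∀ p, (X : ℂ[X]) ^ n ∣ P p := by
    intro p
    have hPsum : P p = ∑ j, ∑ a', ∑ b', ∑ c',
        GP 0 p.1 a' * GP 1 p.2.1 b' * GP 2 p.2.2 c' * C (cf j a' b' c') := by
      rw [hP]
      simp only [hsum, map_sum (C : ℂ →+* ℂ[X]), Finset.mul_sum]
      calc (∑ a', ∑ b', ∑ c', ∑ j, GP 0 p.1 a' * GP 1 p.2.1 b' * GP 2 p.2.2 c' * C (cf j a' b' c'))
          = ∑ a', ∑ b', ∑ j, ∑ c',
              GP 0 p.1 a' * GP 1 p.2.1 b' * GP 2 p.2.2 c' * C (cf j a' b' c') :=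
            Finset.sum_congr rfl fun a' _ => Finset.sum_congr rfl fun b' _ => Finset.sum_comm
        _ = ∑ a', ∑ j, ∑ b', ∑ c',
              GP 0 p.1 a' * GP 1 p.2.1 b' * GP 2 p.2.2 c' * C (cf j a' b' c') :=
            Finset.sum_congr rfl fun a' _ => Finset.sum_comm
        _ = ∑ j, ∑ a', ∑ b', ∑ c',
              GP 0 p.1 a' * GP 1 p.2.1 b' * GP 2 p.2.2 c' * C (cf j a' b' c') :=
            Finset.sum_comm
    rw [hPsum]
    apply Finset.dvd_sum
    intro j _
    rcases fin3_cases (σ j) with hσ | hσ | hσ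
    · have hv := h0 j hσ
      have hfac : (∑ a', ∑ b', ∑ c',
          GP 0 p.1 a' * GP 1 p.2.1 b' * GP 2 p.2.2 c' * C (cf j a' b' c'))
          = (∑ a', GP 0 p.1 a' * C (vv j a'))
            * (∑ b', ∑ c', GP 1 p.2.1 b' * GP 2 p.2.2 c' * C (MM j b' c')) := by
        rw [Finset.sum_mul]
        refine Finset.sum_congr rfl fun a' _ => ?_
        rw [Finset.mul_sum]
        refine Finset.sum_congr rfl fun b' _ => ?_
        rw [Finset.mul_sum]
        refine Finset.sum_congr rfl fun c' _ => ?_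
        rw [hv a' b' c', _root_.map_mul]
        ring
      rw [hfac, hrow 0 (vv j) (hσ ▸ hmemV j) p.1]
      exact ⟨_, mul_assoc _ _ _⟩
    · have hv := h1 j hσ
      have hfac : (∑ a', ∑ b', ∑ c',
          GP 0 p.1 a' * GP 1 p.2.1 b' * GP 2 p.2.2 c' * C (cf j a' b' c'))
          = (∑ b', GP 1 p.2.1 b' * C (vv j b'))
            * (∑ a', ∑ c', GP 0 p.1 a' * GP 2 p.2.2 c' * C (MM j a' c')) := by
        rw [Finset.sum_comm, Finset.sum_mul]
        refine Finset.sum_congr rfl fun b' _ => ?_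
        rw [Finset.mul_sum]
        refine Finset.sum_congr rfl fun a' _ => ?_
        rw [Finset.mul_sum]
        refine Finset.sum_congr rfl fun c' _ => ?_
        rw [hv a' b' c', _root_.map_mul]
        ring
      rw [hfac, hrow 1 (vv j) (hσ ▸ hmemV j) p.2.1]
      exact ⟨_, mul_assoc _ _ _⟩
    · have hv := h2 j hσ
      have hfac : (∑ a', ∑ b', ∑ c',
          GP 0 p.1 a' * GP 1 p.2.1 b' * GP 2 p.2.2 c' * C (cf j a' b' c'))
          = (∑ c', GP 2 p.2.2 c' * C (vv j c'))
            * (∑ a', ∑ b', GP 0 p.1 a' * GP 1 p.2.1 b' * C (MM j a' b')) := by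
        have swap1 : (∑ a', ∑ b', ∑ c',
            GP 0 p.1 a' * GP 1 p.2.1 b' * GP 2 p.2.2 c' * C (cf j a' b' c'))
            = ∑ c', ∑ a', ∑ b',
              GP 0 p.1 a' * GP 1 p.2.1 b' * GP 2 p.2.2 c' * C (cf j a' b' c') := by
          refine Eq.trans (Finset.sum_congr rfl fun a' _ => Finset.sum_comm) ?_
          exact Finset.sum_comm
        rw [swap1, Finset.sum_mul]
        refine Finset.sum_congr rfl fun c' _ => ?_
        rw [Finset.mul_sum]
        refine Finset.sum_congr rfl fun a' _ => ?_
        rw [Finset.mul_sum]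
        refine Finset.sum_congr rfl fun b' _ => ?_
        rw [hv a' b' c', _root_.map_mul]
        ring
      rw [hfac, hrow 2 (vv j) (hσ ▸ hmemV j) p.2.2]
      exact ⟨_, mul_assoc _ _ _⟩
  choose E0 hE0 using hXn
  set E : (Fin n × Fin n × Fin n) → ℂ[X] := fun p => X ^ (n - D) * E0 p with hE
  have hPE : ∀ p, P p = X ^ D * E p := by
    intro p
    rw [hE0 p, hE, ← mul_assoc, ← pow_add]
    congr 2
    omega
  -- the one-parameter subgroup
  set g : Fin 3 → ℂ → Matrix (Fin n) (Fin n) ℂ :=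
    fun i t => LinearMap.toMatrix' (phiOf (V i) (W i) (hW i) (t ^ (n - d i)) ((t⁻¹) ^ (d i)))
    with hg
  have hdet : ∀ (i : Fin 3) (t : ℂ), t ≠ 0 → (g i t).det = 1 := by
    intro i t ht
    rw [hg]
    rw [LinearMap.det_toMatrix', det_aux]
    have hdVi : finrank ℂ (V i) = d i := by rw [hd]
    have hfr : finrank ℂ (W i) = n - d i := by
      have h1 := Submodule.finrank_add_eq_of_isCompl (hW i)
      rw [Module.finrank_fin_fun, hdVi] at h1
      omega
    rw [hfr, hdVi, ← pow_mul, ← pow_mul, Nat.mul_comm (d i) (n - d i), ← mul_pow,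
      mul_inv_cancel₀ ht, one_pow]
  have hgentry : ∀ (i : Fin 3) (t : ℂ), t ≠ 0 → ∀ a b,
      g i t a b = (t⁻¹) ^ (d i) * (GP i a b).eval t := by
    intro i t ht a b
    have htm : g i t = t ^ (n - d i) • PrM i
        + (t⁻¹) ^ (d i) • ((1 : Matrix (Fin n) (Fin n) ℂ) - PrM i) := by
      rw [hg]
      unfold phiOf
      simp only [map_add, _root_.map_smul, map_sub, LinearMap.toMatrix'_id, hPrM]
      rfl
    have hts : t ^ (n - d i) = t ^ n * (t⁻¹) ^ (d i) := by
      rw [inv_pow, eq_comm, mul_inv_eq_iff_eq_mul₀ (pow_ne_zero _ ht), ← pow_add]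
      congr 1
      have := hdn i
      omega
    rw [htm]
    simp only [Matrix.add_apply, Matrix.smul_apply, Matrix.sub_apply, smul_eq_mul,
      hGP, eval_add, eval_mul, eval_pow, eval_X, eval_C]
    rw [hts]
    ring
  have hact : ∀ (t : ℂ), t ≠ 0 → ∀ p : Fin n × Fin n × Fin n,
      act3 (g 0 t) (g 1 t) (g 2 t) T p.1 p.2.1 p.2.2 = (E p).eval t := by
    intro t ht p
    have hPev : (P p).eval t = ∑ a', ∑ b', ∑ c',
        (GP 0 p.1 a').eval t * (GP 1 p.2.1 b').eval t * (GP 2 p.2.2 c').eval t * T a' b' c' := by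
      rw [hP, Polynomial.eval_finset_sum]
      refine Finset.sum_congr rfl fun a' _ => ?_
      rw [Polynomial.eval_finset_sum]
      refine Finset.sum_congr rfl fun b' _ => ?_
      rw [Polynomial.eval_finset_sum]
      refine Finset.sum_congr rfl fun c' _ => ?_
      simp [eval_mul]
    have hleft : act3 (g 0 t) (g 1 t) (g 2 t) T p.1 p.2.1 p.2.2
        = (t⁻¹) ^ D * (P p).eval t := by
      simp only [act3]
      rw [hPev, Finset.mul_sum]
      refine Finset.sum_congr rfl fun a' _ => ?_
      rw [Finset.mul_sum]
      refine Finset.sum_congr rfl fun b' _ => ?_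
      rw [Finset.mul_sum]
      refine Finset.sum_congr rfl fun c' _ => ?_
      rw [hgentry 0 t ht, hgentry 1 t ht, hgentry 2 t ht, hD, pow_add, pow_add]
      ring
    rw [hleft, hPE p, eval_mul, eval_pow, eval_X, ← mul_assoc, inv_pow,
      inv_mul_cancel₀ (pow_ne_zero _ ht), one_mul]
  set Q : ℂ[X] := MvPolynomial.aeval E f with hQ
  set cT : ℂ := MvPolynomial.eval (fun p => T p.1 p.2.1 p.2.2) f with hcT
  have h2 : (Polynomial.evalRingHom (0:ℂ)).comp (algebraMap ℂ ℂ[X]) = RingHom.id ℂ := by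
    ext a; simp
  have hQeval : ∀ t : ℂ, Q.eval t = MvPolynomial.eval (fun p => (E p).eval t) f := by
    intro t
    have h2t : (Polynomial.evalRingHom t).comp (algebraMap ℂ ℂ[X]) = RingHom.id ℂ := by
      ext a; simp
    calc Q.eval t = Polynomial.evalRingHom t (MvPolynomial.aeval E f) := rfl
      _ = MvPolynomial.eval₂Hom ((Polynomial.evalRingHom t).comp (algebraMap ℂ ℂ[X]))
            (fun p => Polynomial.evalRingHom t (E p)) f := by rw [MvPolynomial.map_aeval]
      _ = MvPolynomial.eval (fun p => (E p).eval t) f := by rw [h2t]; rfl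
  have hconst : ∀ t : ℂ, t ≠ 0 → Q.eval t = cT := by
    intro t ht
    rw [hQeval t]
    have heq : (fun p : Fin n × Fin n × Fin n => (E p).eval t)
        = fun p => act3 (g 0 t) (g 1 t) (g 2 t) T p.1 p.2.1 p.2.2 := by
      funext p; rw [hact t ht p]
    rw [heq, hcT]
    exact hinv ⟨g 0 t, hdet 0 t ht⟩ ⟨g 1 t, hdet 1 t ht⟩ ⟨g 2 t, hdet 2 t ht⟩ T
  have hQC : Q = Polynomial.C cT := by
    have hroots : {x : ℂ | (Q - Polynomial.C cT).IsRoot x}.Infinite := by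
      apply Set.Infinite.mono (h := ?_) ((Set.finite_singleton (0:ℂ)).infinite_compl)
      intro x hx
      simp only [Set.mem_setOf_eq, Polynomial.IsRoot, Polynomial.eval_sub, Polynomial.eval_C]
      rw [hconst x hx, sub_self]
    have hz := Polynomial.eq_zero_of_infinite_isRoot _ hroots
    exact sub_eq_zero.mp hz
  have hE0t : ∀ p, (E p).eval 0 = 0 := by
    intro p
    rw [hE]
    have : n - D ≠ 0 := by omega
    simp [zero_pow this]
  have hc0 : cT = Q.eval 0 := by rw [hQC]; simp
  rw [hc0, hQeval 0]
  have hfun : (fun p : Fin n × Fin n × Fin n => (E p).eval 0) = fun _ => (0:ℂ) :=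
    funext hE0t
  rw [hfun]
  exact hf0
end

section
/- Let d ≥ 2, r ≥ 1, n ≥ 1 be integers and let f be a polynomial with integer coefficients in the variables x_{i_1,…,i_d} (i_1, …, i_d ∈ [n]) such that f vanishes on every tensor in ℂ^n ⊗ ⋯ ⊗ ℂ^n of partition rank at most r. Then for every field K, the image of f under the coefficient reduction ℤ → K vanishes on every tensor in K^n ⊗ ⋯ ⊗ K^n of partition rank at most r. -/
open scoped BigOperators

lemma eval_map_aeval {σ τ L : Type*} [CommRing L]
    (s : σ → MvPolynomial τ ℤ) (f : MvPolynomial σ ℤ) (v : τ → L) :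
    MvPolynomial.eval v (MvPolynomial.map (Int.castRingHom L) (MvPolynomial.aeval s f)) =
    MvPolynomial.eval (fun x => MvPolynomial.eval v (MvPolynomial.map (Int.castRingHom L) (s x)))
      (MvPolynomial.map (Int.castRingHom L) f) := by
  have h := MvPolynomial.eval₂_comp_left (MvPolynomial.eval₂Hom (Int.castRingHom L) v)
    (algebraMap ℤ (MvPolynomial τ ℤ)) s f
  rw [MvPolynomial.coe_eval₂Hom] at h
  rw [← MvPolynomial.eval₂_eq_eval_map, MvPolynomial.aeval_def, h,
    ← MvPolynomial.eval₂_eq_eval_map]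
  congr 1
  · exact Subsingleton.elim _ _
  · funext x
    rw [← MvPolynomial.eval₂_eq_eval_map]
    rfl

/-- If a polynomial with integer coefficients vanishes on all complex tensors of
partition rank at most `r`, then over every field `K` its reduction vanishes on all
tensors of partition rank at most `r`. -/
theorem integer_polynomial_vanishes_over_any_field
    (d r n : ℕ) (hd : 2 ≤ d) (hr : 1 ≤ r) (hn : 1 ≤ n)
    (f : MvPolynomial (Fin d → Fin n) ℤ)
    (hvan : ∀ T : (Fin d → Fin n) → ℂ, PartRankLE (n := fun _ => n) T r →
      MvPolynomial.eval T (MvPolynomial.map (Int.castRingHom ℂ) f) = 0)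
    (K : Type*) [Field K] :
    ∀ T : (Fin d → Fin n) → K, PartRankLE (n := fun _ => n) T r →
      MvPolynomial.eval T (MvPolynomial.map (Int.castRingHom K) f) = 0 := by
  rintro T ⟨c, hc, rfl⟩
  choose I hIne hIuniv A B hAB using hc
  classical
  -- parameter variable type
  let V : Type := Σ j : Fin r,
    ((∀ i : {i : Fin d // i ∈ I j}, Fin n) ⊕ (∀ i : {i : Fin d // i ∉ I j}, Fin n))
  -- generic substitution
  let s : (Fin d → Fin n) → MvPolynomial V ℤ := fun x =>
    ∑ j : Fin r, MvPolynomial.X ⟨j, Sum.inl fun i => x i⟩ *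
      MvPolynomial.X ⟨j, Sum.inr fun i => x i⟩
  let g : MvPolynomial V ℤ := MvPolynomial.aeval s f
  have hsC : ∀ (v : V → ℂ) (x : Fin d → Fin n),
      MvPolynomial.eval v (MvPolynomial.map (Int.castRingHom ℂ) (s x)) =
      ∑ j : Fin r, v ⟨j, Sum.inl fun i => x i⟩ * v ⟨j, Sum.inr fun i => x i⟩ := by
    intro v x
    simp [s]
  have hsK : ∀ (v : V → K) (x : Fin d → Fin n),
      MvPolynomial.eval v (MvPolynomial.map (Int.castRingHom K) (s x)) =
      ∑ j : Fin r, v ⟨j, Sum.inl fun i => x i⟩ * v ⟨j, Sum.inr fun i => x i⟩ := by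
    intro v x
    simp [s]
  have hg : g = 0 := by
    have hmapg : MvPolynomial.map (Int.castRingHom ℂ) g =
        MvPolynomial.map (Int.castRingHom ℂ) 0 := by
      rw [map_zero]
      apply MvPolynomial.funext
      intro v
      rw [map_zero (MvPolynomial.eval v), eval_map_aeval s f v]
      have hTv := hvan
        (fun x => ∑ j : Fin r, v ⟨j, Sum.inl fun i => x i⟩ * v ⟨j, Sum.inr fun i => x i⟩)
        ⟨fun j x => v ⟨j, Sum.inl fun i => x i⟩ * v ⟨j, Sum.inr fun i => x i⟩,
          fun j => ⟨I j, hIne j, hIuniv j, fun a => v ⟨j, Sum.inl a⟩, fun b => v ⟨j, Sum.inr b⟩,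
            fun x => rfl⟩, by funext x; simp [Finset.sum_apply]⟩
      simp only [hsC v]
      exact hTv
    exact MvPolynomial.map_injective _ Int.cast_injective hmapg
  have hK := eval_map_aeval s f (fun p : V => Sum.elim (A p.1) (B p.1) p.2)
  rw [show MvPolynomial.aeval s f = g from rfl, hg, map_zero, map_zero] at hK
  have he : (fun x => MvPolynomial.eval (fun p : V => Sum.elim (A p.1) (B p.1) p.2)
      (MvPolynomial.map (Int.castRingHom K) (s x))) = ∑ j, c j := by
    funext x
    rw [hsK _ x]
    simp [Finset.sum_apply, hAB]
  rw [he] at hK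
  exact hK.symm
end

section
/- Let d ≥ 2 and r ≥ 1 be integers, set n := 2^{d+3} r, m := n^{2d}, and S := Σ_{∅ ≠ I ⊊ [d]} r·(n^{|I|} + n^{d−|I|}), where the sum is over all proper nonempty subsets I of [d]. Then C(2m + S − 1, 2m) < C(m + n^d − 1, m), where C(a,b) denotes the binomial coefficient. -/
open scoped BigOperators

lemma aux_choose_add (a M k : ℕ) :
    a * Nat.choose M k + Nat.choose M (k + 1) ≤ Nat.choose (M + a) (k + 1) := by
  induction a with
  | zero => simp
  | succ a ih =>
    have h1 : Nat.choose (M + (a + 1)) (k + 1)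
        = Nat.choose (M + a) k + Nat.choose (M + a) (k + 1) := by
      show Nat.choose (M + a + 1) (k + 1) = _
      rw [Nat.choose_succ_succ]
    have h2 : Nat.choose M k ≤ Nat.choose (M + a) k :=
      Nat.choose_le_choose k (Nat.le_add_right _ _)
    calc (a + 1) * Nat.choose M k + Nat.choose M (k + 1)
        = Nat.choose M k + (a * Nat.choose M k + Nat.choose M (k + 1)) := by ring
      _ ≤ Nat.choose (M + a) k + Nat.choose (M + a) (k + 1) := by
          exact Nat.add_le_add h2 ih
      _ = Nat.choose (M + (a + 1)) (k + 1) := h1.symm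

lemma aux_pow_le_choose (a k : ℕ) : a ^ k ≤ Nat.choose (a * k) k := by
  induction k with
  | zero => simp
  | succ k ih =>
    calc a ^ (k + 1) = a * a ^ k := by ring
      _ ≤ a * Nat.choose (a * k) k := Nat.mul_le_mul_left a ih
      _ ≤ a * Nat.choose (a * k) k + Nat.choose (a * k) (k + 1) := Nat.le_add_right _ _
      _ ≤ Nat.choose (a * k + a) (k + 1) := aux_choose_add a (a * k) k
      _ = Nat.choose (a * (k + 1)) (k + 1) := by ring_nf

/-- The dimension count in the proof of Theorem 3.1: with `n = 2^(d+3) r`,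
`m = n^(2d)` and `S = ∑_{∅ ≠ I ⊊ [d]} r (n^|I| + n^(d-|I|))`, the dimension
`C(2m+S-1, 2m)` of degree-`2m` homogeneous polynomials in `S` variables is strictly
smaller than the dimension `C(m+n^d-1, m)` of degree-`m` homogeneous polynomials in
`n^d` variables. -/
theorem dimension_count (d r : ℕ) (hd : 2 ≤ d) (hr : 1 ≤ r)
    (n m S : ℕ) (hn : n = 2 ^ (d + 3) * r) (hm : m = n ^ (2 * d))
    (hS : S = ∑ I ∈ Finset.univ.filter
        (fun I : Finset (Fin d) => I.Nonempty ∧ I ≠ Finset.univ),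
      r * (n ^ I.card + n ^ (d - I.card))) :
    Nat.choose (2 * m + S - 1) (2 * m) < Nat.choose (m + n ^ d - 1) m := by
  set N := n ^ d with hN
  -- basic size facts
  have hn32 : 32 ≤ n := by
    rw [hn]
    calc (32 : ℕ) = 2 ^ 5 * 1 := by norm_num
      _ ≤ 2 ^ (d + 3) * r := Nat.mul_le_mul (Nat.pow_le_pow_right (by norm_num) (by omega)) hr
  have hn1 : 1 ≤ n := by omega
  have hN32 : 32 ≤ N := le_trans hn32 (Nat.le_self_pow (by omega) n)
  have hmN : m = N ^ 2 := by
    rw [hm, hN, mul_comm, pow_mul]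
  -- S ≥ 1
  have hSpos : 0 < S := by
    rw [hS]
    apply Finset.sum_pos
    · intro I hI
      have : 0 < n ^ I.card := Nat.pow_pos (by omega)
      positivity
    · refine ⟨{(⟨0, by omega⟩ : Fin d)}, ?_⟩
      simp only [Finset.mem_filter, Finset.mem_univ, true_and]
      refine ⟨Finset.singleton_nonempty _, ?_⟩
      intro h
      have h1 : (⟨1, by omega⟩ : Fin d) ∈ ({(⟨0, by omega⟩ : Fin d)} : Finset (Fin d)) := by
        rw [h]; exact Finset.mem_univ _
      simp only [Finset.mem_singleton] at h1
      have := congrArg Fin.val h1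
      simp at this
  -- 4 * S ≤ N
  have hS4 : 4 * S ≤ N := by
    have hbound : S ≤ 2 ^ d * (2 * r * n ^ (d - 1)) := by
      rw [hS]
      calc ∑ I ∈ Finset.univ.filter
            (fun I : Finset (Fin d) => I.Nonempty ∧ I ≠ Finset.univ),
          r * (n ^ I.card + n ^ (d - I.card))
          ≤ (Finset.univ.filter
            (fun I : Finset (Fin d) => I.Nonempty ∧ I ≠ Finset.univ)).card
              * (2 * r * n ^ (d - 1)) := by
            apply Finset.sum_le_card_nsmul
            intro I hI
            simp only [Finset.mem_filter, Finset.mem_univ, true_and] at hI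
            have hc1 : 1 ≤ I.card := Finset.card_pos.mpr hI.1
            have hc2 : I.card < d := by
              have := Finset.card_lt_card (Finset.ssubset_univ_iff.mpr hI.2)
              simpa [Finset.card_univ] using this
            have h1 : n ^ I.card ≤ n ^ (d - 1) :=
              Nat.pow_le_pow_right hn1 (by omega)
            have h2 : n ^ (d - I.card) ≤ n ^ (d - 1) :=
              Nat.pow_le_pow_right hn1 (by omega)
            calc r * (n ^ I.card + n ^ (d - I.card))
                ≤ r * (n ^ (d - 1) + n ^ (d - 1)) := Nat.mul_le_mul_left r (by omega)
              _ = 2 * r * n ^ (d - 1) := by ring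
        _ ≤ 2 ^ d * (2 * r * n ^ (d - 1)) := by
            apply Nat.mul_le_mul_right
            calc (Finset.univ.filter
                (fun I : Finset (Fin d) => I.Nonempty ∧ I ≠ Finset.univ)).card
                ≤ (Finset.univ : Finset (Finset (Fin d))).card :=
                  Finset.card_filter_le _ _
              _ = 2 ^ d := by simp [Finset.card_univ]
    calc 4 * S ≤ 4 * (2 ^ d * (2 * r * n ^ (d - 1))) := Nat.mul_le_mul_left 4 hbound
      _ = 2 ^ (d + 3) * r * n ^ (d - 1) := by ring
      _ = n * n ^ (d - 1) := by rw [hn]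
      _ = n ^ d := by
          rw [← pow_succ']
          congr 1
          omega
  -- rewrite both sides via symmetry
  have e1 : Nat.choose (2 * m + S - 1) (2 * m) = Nat.choose (2 * m + S - 1) (S - 1) := by
    rw [← Nat.choose_symm (by omega : 2 * m ≤ 2 * m + S - 1)]
    congr 1
    omega
  have hNm : 1 ≤ N := by omega
  have e2 : Nat.choose (m + N - 1) m = Nat.choose (m + N - 1) (N - 1) := by
    rw [← Nat.choose_symm (by omega : m ≤ m + N - 1)]
    congr 1
    omega
  rw [e1, e2]
  -- upper bound chain
  have hub : 2 * m + S - 1 ≤ N ^ 3 := by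
    have h1 : S ≤ N := by omega
    have h2 : 3 * N ^ 2 ≤ N ^ 3 := by nlinarith
    have h4 : N ≤ N ^ 2 := by nlinarith
    have h3 : 2 * m + S ≤ N ^ 3 := by nlinarith [hmN]
    omega
  calc Nat.choose (2 * m + S - 1) (S - 1)
      ≤ (2 * m + S - 1) ^ (S - 1) := Nat.choose_le_pow _ _
    _ ≤ (N ^ 3) ^ (S - 1) := Nat.pow_le_pow_left hub _
    _ = N ^ (3 * (S - 1)) := by rw [← pow_mul]
    _ < N ^ (N - 1) := by
        apply Nat.pow_lt_pow_right (by omega : 1 < N)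
        omega
    _ ≤ (N + 1) ^ (N - 1) := Nat.pow_le_pow_left (by omega) _
    _ ≤ Nat.choose ((N + 1) * (N - 1)) (N - 1) := aux_pow_le_choose _ _
    _ ≤ Nat.choose (m + N - 1) (N - 1) := by
        apply Nat.choose_le_choose
        obtain ⟨k, hk⟩ : ∃ k, N = k + 1 := ⟨N - 1, by omega⟩
        rw [hmN, hk]
        have ha : (k + 1 + 1) * (k + 1 - 1) = k ^ 2 + 2 * k := by
          simp only [Nat.add_sub_cancel]; ring
        have hb : (k + 1) ^ 2 = k ^ 2 + 2 * k + 1 := by ring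
        omega
end
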